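/- arXiv:1906.08386 — 6 statements merged into one kernel-verified Lean document; each statement's English description precedes it below -/
import Mathlib

section
/- Let μ₀ and μ₁ be probability measures on a measurable space Ω (the group-conditional data distributions), let Y : Ω → ℝ be a measurable label taking values in {0,1}, and let Ŷ : Ω → ℝ be a measurable predictor taking values in {0,1}. If Ŷ satisfies demographic parity, i.e., μ₀{Ŷ = 1} = μ₁{Ŷ = 1}, then err₀(Ŷ) + err₁(Ŷ) ≥ |μ₀{Y = 1} − μ₁{Y = 1}|. -/
open MeasureTheory

lemma bin_eq_indicator {Ω : Type*} (f : Ω → ℝ) (hf01 : ∀ ω, f ω = 0 ∨ f ω = 1) :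
    f = Set.indicator {ω | f ω = 1} (fun _ => (1 : ℝ)) := by
  funext ω
  rcases hf01 ω with h | h
  · simp only [Set.indicator, Set.mem_setOf_eq, h]
    norm_num
  · simp [Set.indicator, h]

lemma bin_integrable {Ω : Type*} [MeasurableSpace Ω] (μ : Measure Ω)
    [IsProbabilityMeasure μ] (f : Ω → ℝ) (hf : Measurable f)
    (hf01 : ∀ ω, f ω = 0 ∨ f ω = 1) : Integrable f μ := by
  apply Integrable.mono' (integrable_const (1 : ℝ)) hf.aestronglyMeasurable
  filter_upwards with ω
  rcases hf01 ω with h | h <;> simp [h]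

lemma bin_integral {Ω : Type*} [MeasurableSpace Ω] (μ : Measure Ω)
    [IsProbabilityMeasure μ] (f : Ω → ℝ) (hf : Measurable f)
    (hf01 : ∀ ω, f ω = 0 ∨ f ω = 1) :
    ∫ ω, f ω ∂μ = (μ {ω | f ω = 1}).toReal := by
  have hs : MeasurableSet {ω | f ω = 1} := hf (measurableSet_singleton 1)
  conv_lhs => rw [show (fun ω => f ω) = f from rfl, bin_eq_indicator f hf01]
  rw [integral_indicator hs]
  simp
  rfl

lemma err_ge {Ω : Type*} [MeasurableSpace Ω] (μ : Measure Ω)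
    [IsProbabilityMeasure μ] (Y Yhat : Ω → ℝ) (hY : Measurable Y)
    (hYhat : Measurable Yhat) (hY01 : ∀ ω, Y ω = 0 ∨ Y ω = 1)
    (hYhat01 : ∀ ω, Yhat ω = 0 ∨ Yhat ω = 1) :
    (∫ ω, |Y ω - Yhat ω| ∂μ) ≥
      |(μ {ω | Y ω = 1}).toReal - (μ {ω | Yhat ω = 1}).toReal| := by
  have hIY := bin_integrable μ Y hY hY01
  have hIYh := bin_integrable μ Yhat hYhat hYhat01
  calc |(μ {ω | Y ω = 1}).toReal - (μ {ω | Yhat ω = 1}).toReal|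
      = |∫ ω, (Y ω - Yhat ω) ∂μ| := by
        rw [integral_sub hIY hIYh, bin_integral μ Y hY hY01,
          bin_integral μ Yhat hYhat hYhat01]
    _ ≤ ∫ ω, |Y ω - Yhat ω| ∂μ := by
        simpa [Real.norm_eq_abs] using
          norm_integral_le_integral_norm (μ := μ) (fun ω => Y ω - Yhat ω)

/-- **Tradeoff between demographic parity and joint utility** (Theorem 3.1).
If the predictor `Yhat` satisfies demographic parity, then the sum of the
group-wise errors is at least the base-rate gap between the two groups. -/
theorem fairness_lower_bound_demographic_parity
    {Ω : Type*} [MeasurableSpace Ω]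
    (μ₀ μ₁ : Measure Ω) [IsProbabilityMeasure μ₀] [IsProbabilityMeasure μ₁]
    (Y Yhat : Ω → ℝ) (hY : Measurable Y) (hYhat : Measurable Yhat)
    (hY01 : ∀ ω, Y ω = 0 ∨ Y ω = 1) (hYhat01 : ∀ ω, Yhat ω = 0 ∨ Yhat ω = 1)
    (hDP : μ₀ {ω | Yhat ω = 1} = μ₁ {ω | Yhat ω = 1}) :
    (∫ ω, |Y ω - Yhat ω| ∂μ₀) + (∫ ω, |Y ω - Yhat ω| ∂μ₁) ≥
      |(μ₀ {ω | Y ω = 1}).toReal - (μ₁ {ω | Y ω = 1}).toReal| := by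
  have h0 := err_ge μ₀ Y Yhat hY hYhat hY01 hYhat01
  have h1 := err_ge μ₁ Y Yhat hY hYhat hY01 hYhat01
  rw [hDP] at h0
  calc |(μ₀ {ω | Y ω = 1}).toReal - (μ₁ {ω | Y ω = 1}).toReal|
      = |((μ₀ {ω | Y ω = 1}).toReal - (μ₁ {ω | Yhat ω = 1}).toReal)
          + ((μ₁ {ω | Yhat ω = 1}).toReal - (μ₁ {ω | Y ω = 1}).toReal)| := by
        ring_nf
    _ ≤ |(μ₀ {ω | Y ω = 1}).toReal - (μ₁ {ω | Yhat ω = 1}).toReal|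
          + |(μ₁ {ω | Yhat ω = 1}).toReal - (μ₁ {ω | Y ω = 1}).toReal| :=
        abs_add_le _ _
    _ ≤ (∫ ω, |Y ω - Yhat ω| ∂μ₀) + (∫ ω, |Y ω - Yhat ω| ∂μ₁) := by
        rw [abs_sub_comm ((μ₁ {ω | Yhat ω = 1}).toReal)]
        exact add_le_add h0 h1
end

section
/- Let μ₀ and μ₁ be probability measures on a measurable space Ω (the group-conditional data distributions), let Y : Ω → ℝ be a measurable label taking values in {0,1}, and let Ŷ : Ω → ℝ be a measurable predictor taking values in {0,1}. If Ŷ satisfies demographic parity, i.e., μ₀{Ŷ = 1} = μ₁{Ŷ = 1}, then max{err₀(Ŷ), err₁(Ŷ)} ≥ |μ₀{Y = 1} − μ₁{Y = 1}| / 2. -/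
open MeasureTheory

lemma indicator_eq_aux {Ω : Type*} (f : Ω → ℝ) (h01 : ∀ ω, f ω = 0 ∨ f ω = 1) :
    f = Set.indicator {ω | f ω = 1} (fun _ => (1 : ℝ)) := by
  funext ω
  rcases h01 ω with h | h <;> simp [Set.indicator, Set.mem_setOf_eq, h]

lemma integral_eq_measure_aux {Ω : Type*} [MeasurableSpace Ω] (μ : Measure Ω)
    [IsProbabilityMeasure μ] (f : Ω → ℝ) (hf : Measurable f)
    (h01 : ∀ ω, f ω = 0 ∨ f ω = 1) :
    ∫ ω, f ω ∂μ = (μ {ω | f ω = 1}).toReal := by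
  have hs : MeasurableSet {ω | f ω = 1} := hf (measurableSet_singleton 1)
  conv_lhs => rw [indicator_eq_aux f h01]
  rw [integral_indicator_const _ hs]
  simp
  rfl

lemma integrable_aux {Ω : Type*} [MeasurableSpace Ω] (μ : Measure Ω)
    [IsProbabilityMeasure μ] (f : Ω → ℝ) (hf : Measurable f)
    (h01 : ∀ ω, f ω = 0 ∨ f ω = 1) : Integrable f μ := by
  have hs : MeasurableSet {ω | f ω = 1} := hf (measurableSet_singleton 1)
  rw [indicator_eq_aux f h01]
  exact (integrable_const (1 : ℝ)).indicator hs

lemma err_ge_aux {Ω : Type*} [MeasurableSpace Ω] (μ : Measure Ω)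
    [IsProbabilityMeasure μ] (Y Yhat : Ω → ℝ) (hY : Measurable Y)
    (hYhat : Measurable Yhat)
    (hY01 : ∀ ω, Y ω = 0 ∨ Y ω = 1) (hYhat01 : ∀ ω, Yhat ω = 0 ∨ Yhat ω = 1) :
    |(μ {ω | Y ω = 1}).toReal - (μ {ω | Yhat ω = 1}).toReal| ≤
      ∫ ω, |Y ω - Yhat ω| ∂μ := by
  have hiY := integrable_aux μ Y hY hY01
  have hiYh := integrable_aux μ Yhat hYhat hYhat01
  rw [← integral_eq_measure_aux μ Y hY hY01,
    ← integral_eq_measure_aux μ Yhat hYhat hYhat01,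
    ← integral_sub hiY hiYh]
  simpa [Real.norm_eq_abs] using norm_integral_le_integral_norm (fun ω => Y ω - Yhat ω) (μ := μ)

/-- **Corollary 3.2.** If the predictor `Yhat` satisfies demographic parity, then at
least one of the two groups incurs error at least half of the base-rate gap. -/
theorem fairness_max_error_lower_bound_demographic_parity
    {Ω : Type*} [MeasurableSpace Ω]
    (μ₀ μ₁ : Measure Ω) [IsProbabilityMeasure μ₀] [IsProbabilityMeasure μ₁]
    (Y Yhat : Ω → ℝ) (hY : Measurable Y) (hYhat : Measurable Yhat)
    (hY01 : ∀ ω, Y ω = 0 ∨ Y ω = 1) (hYhat01 : ∀ ω, Yhat ω = 0 ∨ Yhat ω = 1)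
    (hDP : μ₀ {ω | Yhat ω = 1} = μ₁ {ω | Yhat ω = 1}) :
    max (∫ ω, |Y ω - Yhat ω| ∂μ₀) (∫ ω, |Y ω - Yhat ω| ∂μ₁) ≥
      |(μ₀ {ω | Y ω = 1}).toReal - (μ₁ {ω | Y ω = 1}).toReal| / 2 := by
  have h0 := err_ge_aux μ₀ Y Yhat hY hYhat hY01 hYhat01
  have h1 := err_ge_aux μ₁ Y Yhat hY hYhat hY01 hYhat01
  rw [hDP] at h0
  set p := (μ₁ {ω | Yhat ω = 1}).toReal
  set a := (μ₀ {ω | Y ω = 1}).toReal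
  set b := (μ₁ {ω | Y ω = 1}).toReal
  have key : |a - b| ≤ |a - p| + |b - p| := by
    have := abs_sub (a - p) (b - p)
    calc |a - b| = |(a - p) - (b - p)| := by ring_nf
    _ ≤ |a - p| + |b - p| := abs_sub _ _
  have hle : |a - b| / 2 ≤ max (∫ ω, |Y ω - Yhat ω| ∂μ₀) (∫ ω, |Y ω - Yhat ω| ∂μ₁) := by
    rcases le_total (|a - p|) (|b - p|) with h | h
    · calc |a - b| / 2 ≤ (|b - p| + |b - p|) / 2 := by linarith
      _ = |b - p| := by ring
      _ ≤ ∫ ω, |Y ω - Yhat ω| ∂μ₁ := h1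
      _ ≤ _ := le_max_right _ _
    · calc |a - b| / 2 ≤ (|a - p| + |a - p|) / 2 := by linarith
      _ = |a - p| := by ring
      _ ≤ ∫ ω, |Y ω - Yhat ω| ∂μ₀ := h0
      _ ≤ _ := le_max_left _ _
  exact hle
end

section
/- Let μ₀ and μ₁ be probability measures on a measurable space Ω, let Y : Ω → ℝ be a measurable label taking values in {0,1}, let g : Ω → 𝒵 be a measurable feature map into a measurable space 𝒵, let h : 𝒵 → ℝ be measurable taking values in {0,1}, and set Ŷ = h ∘ g. If d_JS(g♯μ₀, g♯μ₁) ≤ d_JS(Y♯μ₀, Y♯μ₁), then err₀(Ŷ) + err₁(Ŷ) ≥ (d_JS(Y♯μ₀, Y♯μ₁) − d_JS(g♯μ₀, g♯μ₁))² / 2. -/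
open MeasureTheory
open scoped ENNReal

/-- Kullback–Leibler divergence `KL(P ‖ Q) = ∫ log (dP/dQ) dP`. -/
noncomputable def klDiv {Ω : Type*} [MeasurableSpace Ω] (P Q : Measure Ω) : ℝ :=
  ∫ ω, Real.log ((P.rnDeriv Q ω).toReal) ∂P

/-- Jensen–Shannon divergence
`JSD(P, Q) = (1/2) KL(P ‖ M) + (1/2) KL(Q ‖ M)` where `M = (P + Q)/2`. -/
noncomputable def JSD {Ω : Type*} [MeasurableSpace Ω] (P Q : Measure Ω) : ℝ :=
  (klDiv P ((2 : ℝ≥0∞)⁻¹ • (P + Q)) + klDiv Q ((2 : ℝ≥0∞)⁻¹ • (P + Q))) / 2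

/-- Jensen–Shannon distance `d_JS(P, Q) = √JSD(P, Q)`. -/
noncomputable def dJS {Ω : Type*} [MeasurableSpace Ω] (P Q : Measure Ω) : ℝ :=
  Real.sqrt (JSD P Q)


section JSAux

open Real Set

noncomputable def bern (p : ℝ≥0∞) : Measure ℝ := p • Measure.dirac 1 + (1 - p) • Measure.dirac 0

noncomputable def Fml (x : ℝ) : ℝ := x * Real.log x
noncomputable def psi (x y : ℝ) : ℝ := Fml x + Fml y - 2 * Fml ((x + y) / 2)
noncomputable def klB (p m : ℝ) : ℝ :=
  p * Real.log (p / m) + (1 - p) * Real.log ((1 - p) / (1 - m))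
noncomputable def jsdB (p q : ℝ) : ℝ := (psi p q + psi (1 - p) (1 - q)) / 2


lemma continuous_Fml : Continuous Fml := Real.continuous_mul_log

lemma continuous_psi (x : ℝ) : Continuous fun t : ℝ => psi x t := by
  simp only [psi]
  exact (continuous_const.add continuous_Fml).sub
    (continuous_const.mul (continuous_Fml.comp (by continuity)))

lemma psi_symm (x y : ℝ) : psi x y = psi y x := by
  unfold psi; rw [add_comm (Fml x), add_comm x]

lemma hasDerivAt_psi_right (x : ℝ) {t : ℝ} (ht : 0 < t) (hxt : 0 < x + t) :
    HasDerivAt (fun u => psi x u) (Real.log t - Real.log ((x + t) / 2)) t := by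
  have h1 : HasDerivAt Fml (Real.log t + 1) t := Real.hasDerivAt_mul_log (ne_of_gt ht)
  have h2 : HasDerivAt (fun u : ℝ => (x + u) / 2) (1 / 2) t := by
    simpa using ((hasDerivAt_id t).const_add x).div_const 2
  have h3 : HasDerivAt (fun u => Fml ((x + u) / 2)) ((Real.log ((x + t) / 2) + 1) * (1 / 2)) t :=
    by have := (Real.hasDerivAt_mul_log (ne_of_gt (by linarith : (0:ℝ) < (x + t) / 2))).comp t h2
       exact this
  have h4 := ((hasDerivAt_const t (Fml x)).add h1).sub (h3.const_mul 2)
  have h5 : (fun u => psi x u) = fun u => Fml x + Fml u - 2 * Fml ((x + u) / 2) := rfl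
  have h6 : Real.log t - Real.log ((x + t) / 2)
      = 0 + (Real.log t + 1) - 2 * ((Real.log ((x + t) / 2) + 1) * (1 / 2)) := by ring
  rw [h5, h6]
  exact h4

lemma psi_le (x y : ℝ) (hx : 0 ≤ x) (hxy : x ≤ y) : psi x y ≤ (y - x) * Real.log 2 := by
  rcases eq_or_lt_of_le hx with hx0 | hx0
  · -- x = 0
    have h0y : (0:ℝ) ≤ y := le_trans hx hxy
    have : psi 0 y = y * Real.log 2 := by
      rcases eq_or_lt_of_le h0y with h0 | h0
      · simp [psi, Fml, ← h0]
      · unfold psi Fml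
        rw [zero_add, Real.log_div (ne_of_gt h0) two_ne_zero]
        ring
    rw [← hx0, this, sub_zero]
  · -- 0 < x
    set G : ℝ → ℝ := fun t => (t - x) * Real.log 2 - psi x t with hG
    have hd : ∀ t ∈ interior (Ici x), HasDerivAt G (Real.log (x + t) - Real.log t) t := by
      intro t ht
      rw [interior_Ici, mem_Ioi] at ht
      have ht0 : 0 < t := lt_trans hx0 ht
      have h1 := ((hasDerivAt_id t).sub_const x).mul_const (Real.log 2)
      have h2 := hasDerivAt_psi_right x ht0 (by linarith)
      have h4 := h1.sub h2
      have : Real.log (x + t) - Real.log t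
          = 1 * Real.log 2 - (Real.log t - Real.log ((x + t) / 2)) := by
        have : Real.log (x + t) = Real.log 2 + Real.log ((x + t) / 2) := by
          rw [← Real.log_mul two_ne_zero (ne_of_gt (by linarith : (0:ℝ) < (x + t) / 2))]
          congr 1; ring
        rw [this]; ring
      rw [this]
      exact h4
    have hmono : MonotoneOn G (Ici x) := by
      apply monotoneOn_of_deriv_nonneg (convex_Ici x)
      · exact (((continuous_id.sub continuous_const).mul continuous_const).sub
          (continuous_psi x)).continuousOn
      · intro t ht
        exact (hd t ht).differentiableAt.differentiableWithinAt
      · intro t ht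
        rw [(hd t ht).deriv]
        have ht' : x < t := by rwa [interior_Ici, mem_Ioi] at ht
        have ht0 : 0 < t := lt_trans hx0 ht'
        have := Real.log_le_log ht0 (by linarith : t ≤ x + t)
        linarith
    have h1 : G x ≤ G y := hmono (mem_Ici.2 le_rfl) (mem_Ici.2 hxy) hxy
    have h2 : G x = 0 := by
      simp only [hG, psi]
      rw [show (x + x) / 2 = x by ring]
      ring
    simp only [hG] at h1 h2
    linarith

lemma jsdB_le_abs' {p q : ℝ} (hp : p ∈ Icc (0:ℝ) 1) (hq : q ∈ Icc (0:ℝ) 1) (hpq : p ≤ q) :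
    jsdB p q ≤ |p - q| := by
  have h1 : psi p q ≤ (q - p) * Real.log 2 := psi_le p q hp.1 hpq
  have h2 : psi (1 - p) (1 - q) ≤ (q - p) * Real.log 2 := by
    rw [psi_symm]
    have := psi_le (1 - q) (1 - p) (by linarith [hq.2]) (by linarith)
    convert this using 2
    ring
  have hlog2 : Real.log 2 ≤ 1 := by
    nlinarith [Real.log_two_lt_d9]
  have habs : |p - q| = q - p := by
    rw [abs_sub_comm, abs_of_nonneg (by linarith)]
  rw [habs]
  unfold jsdB
  nlinarith [Real.log_pos (by norm_num : (1:ℝ) < 2)]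

lemma jsdB_symm (p q : ℝ) : jsdB p q = jsdB q p := by
  unfold jsdB; rw [psi_symm p q, psi_symm (1-p) (1-q)]

lemma jsdB_le_abs {p q : ℝ} (hp : p ∈ Icc (0:ℝ) 1) (hq : q ∈ Icc (0:ℝ) 1) :
    jsdB p q ≤ |p - q| := by
  rcases le_total p q with hpq | hpq
  · exact jsdB_le_abs' hp hq hpq
  · rw [jsdB_symm, abs_sub_comm]
    exact jsdB_le_abs' hq hp hpq

lemma klB_add_klB {p q : ℝ} (hp : p ∈ Icc (0:ℝ) 1) (hq : q ∈ Icc (0:ℝ) 1) :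
    klB p ((p + q)/2) + klB q ((p + q)/2) = 2 * jsdB p q := by
  have T : ∀ a b : ℝ, 0 ≤ a → a / 2 ≤ b →
      a * Real.log (a / b) = a * Real.log a - a * Real.log b := by
    intro a b ha hab
    rcases eq_or_lt_of_le ha with h0 | h0
    · simp [← h0]
    · rw [Real.log_div (ne_of_gt h0) (ne_of_gt (by linarith))]
      ring
  have e1 : p * Real.log (p / ((p+q)/2)) = p * Real.log p - p * Real.log ((p+q)/2) :=
    T p ((p+q)/2) hp.1 (by linarith [hq.1])
  have e2 : q * Real.log (q / ((p+q)/2)) = q * Real.log q - q * Real.log ((p+q)/2) :=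
    T q ((p+q)/2) hq.1 (by linarith [hp.1])
  have e3 : (1-p) * Real.log ((1-p) / (1 - (p+q)/2))
      = (1-p) * Real.log (1-p) - (1-p) * Real.log (1 - (p+q)/2) :=
    T (1-p) (1 - (p+q)/2) (by linarith [hp.2]) (by linarith [hq.2])
  have e4 : (1-q) * Real.log ((1-q) / (1 - (p+q)/2))
      = (1-q) * Real.log (1-q) - (1-q) * Real.log (1 - (p+q)/2) :=
    T (1-q) (1 - (p+q)/2) (by linarith [hq.2]) (by linarith [hp.2])
  unfold klB jsdB psi Fml
  rw [show (1 - p + (1 - q)) / 2 = 1 - (p+q)/2 by ring]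
  rw [e1, e2, e3, e4]
  ring



lemma exp_antideriv {s : ℝ} (hs : s ≠ 0) (t : ℝ) :
    HasDerivAt (fun t : ℝ => -Real.exp (-(t * s)) / s) (Real.exp (-(t * s))) t := by
  have h1 : HasDerivAt (fun t : ℝ => -(t * s)) (-s) t := by
    have := ((hasDerivAt_id' t).mul_const s).neg; rwa [one_mul] at this
  have h2 := (h1.exp.neg).div_const s
  exact h2.congr_deriv (by rw [div_eq_iff hs]; ring)

lemma exp_int {s : ℝ} (hs : 0 < s) {a b : ℝ} (hab : a ≤ b) :
    ∫ t in Set.Ioc a b, Real.exp (-(t * s)) =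
      (Real.exp (-(a * s)) - Real.exp (-(b * s))) / s := by
  rw [← intervalIntegral.integral_of_le hab]
  rw [intervalIntegral.integral_eq_sub_of_hasDerivAt
    (fun t _ => exp_antideriv (ne_of_gt hs) t)
    ((Continuous.intervalIntegrable (by continuity) a b))]
  field_simp
  ring

lemma exp_Ioi {c : ℝ} (hc : 0 < c) :
    ∫ s in Set.Ioi (0:ℝ), Real.exp (-(c * s)) = 1 / c := by
  have h := integral_comp_mul_left_Ioi (fun u => Real.exp (-u)) 0 hc
  simp only [mul_zero] at h
  rw [show (fun s => Real.exp (-(c * s))) = fun s => (fun u => Real.exp (-u)) (c * s) from rfl, h,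
    integral_exp_neg_Ioi]
  simp [smul_eq_mul, one_div]

lemma exp_Ioi_lint {c : ℝ} (hc : 0 < c) :
    ∫⁻ s in Set.Ioi (0:ℝ), ENNReal.ofReal (Real.exp (-(c * s))) = ENNReal.ofReal (1 / c) := by
  rw [← ofReal_integral_eq_lintegral_ofReal]
  · rw [exp_Ioi hc]
  · have := exp_neg_integrableOn_Ioi 0 hc
    simpa [neg_mul, IntegrableOn] using this
  · exact Filter.Eventually.of_forall fun s => (Real.exp_pos _).le

set_option maxHeartbeats 1000000 in
lemma psi_eq_lintegral' {x y : ℝ} (hx : 0 < x) (hxy : x ≤ y) :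
    (∫⁻ s in Ioi (0:ℝ), ENNReal.ofReal
      (((Real.exp (-(x/2) * s) - Real.exp (-(y/2) * s)) / s) ^ 2)) = ENNReal.ofReal (psi x y) := by
  set a : ℝ := x / 2 with ha
  set b : ℝ := y / 2 with hb
  have ha0 : 0 < a := by positivity
  have hab : a ≤ b := by rw [ha, hb]; linarith
  have hb0 : 0 < b := lt_of_lt_of_le ha0 hab
  -- Step 1 : pointwise expansion of the integrand for s > 0
  have step1 : ∀ s : ℝ, s ∈ Ioi (0:ℝ) →
      ENNReal.ofReal (((Real.exp (-a * s) - Real.exp (-b * s)) / s) ^ 2)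
        = ∫⁻ t in Ioc a b, ∫⁻ t' in Ioc a b, ENNReal.ofReal (Real.exp (-((t + t') * s))) := by
    intro s hs
    rw [mem_Ioi] at hs
    set r : ℝ := ∫ t in Set.Ioc a b, Real.exp (-(t * s)) with hr
    have hrval : r = (Real.exp (-(a * s)) - Real.exp (-(b * s))) / s := exp_int hs hab
    have hrnn : 0 ≤ r := by
      apply integral_nonneg
      intro t; exact (Real.exp_pos _).le
    have hint : IntegrableOn (fun t => Real.exp (-(t * s))) (Ioc a b) :=
      (Real.continuous_exp.comp (continuous_id.mul continuous_const).neg).integrableOn_Ioc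
    have hofr : ENNReal.ofReal r = ∫⁻ t in Ioc a b, ENNReal.ofReal (Real.exp (-(t * s))) := by
      rw [← ofReal_integral_eq_lintegral_ofReal hint
        (Filter.Eventually.of_forall fun t => (Real.exp_pos _).le)]
    have hsq : ENNReal.ofReal (((Real.exp (-a * s) - Real.exp (-b * s)) / s) ^ 2)
        = ENNReal.ofReal r * ENNReal.ofReal r := by
      rw [← ENNReal.ofReal_mul hrnn]
      congr 1
      rw [hrval]
      rw [neg_mul, neg_mul]
      ring
    rw [hsq]
    -- turn the product into a double lintegral
    have hmeas1' : Measurable fun t : ℝ => ENNReal.ofReal (Real.exp (-(t * s))) :=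
      ((Real.continuous_exp.comp (continuous_id.mul continuous_const).neg).measurable).ennreal_ofReal
    have hmeas1 : Measurable fun t : ℝ => ENNReal.ofReal (Real.exp (-(t * s))) :=
      ((Real.continuous_exp.comp (continuous_id.mul continuous_const).neg).measurable).ennreal_ofReal
    have inner_t : ∀ t : ℝ, (∫⁻ t' in Ioc a b, ENNReal.ofReal (Real.exp (-((t + t') * s))))
        = ENNReal.ofReal (Real.exp (-(t * s))) * ENNReal.ofReal r := by
      intro t
      rw [hofr, ← lintegral_const_mul _ hmeas1]
      apply lintegral_congr
      intro t'
      rw [← ENNReal.ofReal_mul (Real.exp_pos _).le, ← Real.exp_add]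
      congr 2
      ring
    calc ENNReal.ofReal r * ENNReal.ofReal r
        = ∫⁻ t in Ioc a b, ENNReal.ofReal (Real.exp (-(t * s))) * ENNReal.ofReal r := by
          rw [lintegral_mul_const _ hmeas1, ← hofr]
      _ = ∫⁻ t in Ioc a b, ∫⁻ t' in Ioc a b, ENNReal.ofReal (Real.exp (-((t + t') * s))) :=
          lintegral_congr fun t => (inner_t t).symm
  -- rewrite the outer integrand
  have hLHS : (∫⁻ s in Ioi (0:ℝ), ENNReal.ofReal
      (((Real.exp (-(x/2) * s) - Real.exp (-(y/2) * s)) / s) ^ 2))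
      = ∫⁻ s in Ioi (0:ℝ), ∫⁻ t in Ioc a b, ∫⁻ t' in Ioc a b,
          ENNReal.ofReal (Real.exp (-((t + t') * s))) := by
    apply setLIntegral_congr_fun measurableSet_Ioi
    exact step1
  rw [hLHS]
  -- Fubini swaps
  have hmeasF : Measurable fun p : (ℝ × ℝ) × ℝ => ENNReal.ofReal (Real.exp (-((p.1.2 + p.2) * p.1.1))) :=
    ((Real.continuous_exp.comp
      (((continuous_fst.snd.add continuous_snd).mul continuous_fst.fst).neg)).measurable).ennreal_ofReal
  have swap1 : (∫⁻ s in Ioi (0:ℝ), ∫⁻ t in Ioc a b, ∫⁻ t' in Ioc a b,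
          ENNReal.ofReal (Real.exp (-((t + t') * s))))
      = ∫⁻ t in Ioc a b, ∫⁻ s in Ioi (0:ℝ), ∫⁻ t' in Ioc a b,
          ENNReal.ofReal (Real.exp (-((t + t') * s))) := by
    apply lintegral_lintegral_swap
    apply Measurable.aemeasurable
    apply Measurable.lintegral_prod_right (f := fun (p : ℝ × ℝ) (t' : ℝ) =>
      ENNReal.ofReal (Real.exp (-((p.2 + t') * p.1))))
    exact hmeasF
  rw [swap1]
  have swap2 : ∀ t : ℝ, (∫⁻ s in Ioi (0:ℝ), ∫⁻ t' in Ioc a b,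
          ENNReal.ofReal (Real.exp (-((t + t') * s))))
      = ∫⁻ t' in Ioc a b, ∫⁻ s in Ioi (0:ℝ),
          ENNReal.ofReal (Real.exp (-((t + t') * s))) := by
    intro t
    apply lintegral_lintegral_swap
    apply Measurable.aemeasurable
    exact ((Real.continuous_exp.comp
      (((continuous_const.add continuous_snd).mul continuous_fst).neg)).measurable).ennreal_ofReal
  -- innermost integral
  have inner : ∀ t ∈ Ioc a b, ∀ t' ∈ Ioc a b,
      (∫⁻ s in Ioi (0:ℝ), ENNReal.ofReal (Real.exp (-((t + t') * s))))
        = ENNReal.ofReal (1 / (t + t')) := by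
    intro t ht t' ht'
    exact exp_Ioi_lint (by have := ht.1; have := ht'.1; linarith)
  have key : (∫⁻ t in Ioc a b, ∫⁻ s in Ioi (0:ℝ), ∫⁻ t' in Ioc a b,
          ENNReal.ofReal (Real.exp (-((t + t') * s))))
      = ∫⁻ t in Ioc a b, ENNReal.ofReal (Real.log (t + b) - Real.log (t + a)) := by
    apply setLIntegral_congr_fun measurableSet_Ioc
    intro t ht
    beta_reduce
    rw [swap2 t]
    have h1 : (∫⁻ t' in Ioc a b, ∫⁻ s in Ioi (0:ℝ),
            ENNReal.ofReal (Real.exp (-((t + t') * s))))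
        = ∫⁻ t' in Ioc a b, ENNReal.ofReal (1 / (t + t')) := by
      apply setLIntegral_congr_fun measurableSet_Ioc
      exact (fun t' ht' => inner t ht t' ht')
    rw [h1]
    -- compute ∫ t' in Ioc a b, 1/(t+t')
    have hpos : ∀ t' ∈ Icc a b, 0 < t + t' := by
      intro t' ht'; have := ht.1; have := ht'.1; linarith
    have hintc : IntegrableOn (fun t' => 1 / (t + t')) (Ioc a b) := by
      apply IntegrableOn.mono_set _ Ioc_subset_Icc_self
      apply ContinuousOn.integrableOn_Icc
      apply ContinuousOn.div continuousOn_const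
      · exact (continuous_const.add continuous_id).continuousOn
      · intro t' ht'; exact ne_of_gt (hpos t' ht')
    rw [← ofReal_integral_eq_lintegral_ofReal hintc]
    swap
    · rw [Filter.EventuallyLE, ae_restrict_iff' measurableSet_Ioc]
      apply Filter.Eventually.of_forall
      intro t' ht'
      have := hpos t' (Ioc_subset_Icc_self ht')
      positivity
    congr 1
    rw [← intervalIntegral.integral_of_le hab]
    have hderiv : ∀ u ∈ uIcc a b, HasDerivAt (fun v => Real.log (t + v)) (1 / (t + u)) u := by
      intro u hu
      rw [uIcc_of_le hab] at hu
      have h2 : HasDerivAt (fun v : ℝ => t + v) 1 u := by simpa using (hasDerivAt_id u).const_add t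
      have h3 := (Real.hasDerivAt_log (ne_of_gt (hpos u hu))).comp u h2
      exact h3.congr_deriv (by simp [one_div])
    have hii : IntervalIntegrable (fun t' => 1 / (t + t')) volume a b := by
      apply ContinuousOn.intervalIntegrable
      rw [uIcc_of_le hab]
      apply ContinuousOn.div continuousOn_const
      · exact (continuous_const.add continuous_id).continuousOn
      · intro u hu; exact ne_of_gt (hpos u hu)
    rw [intervalIntegral.integral_eq_sub_of_hasDerivAt hderiv hii]
  rw [key]
  -- final outer integral
  have hlogpos : ∀ t ∈ Icc a b, 0 ≤ Real.log (t + b) - Real.log (t + a) := by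
    intro t ht
    have h1 : 0 < t + a := by have := ht.1; linarith
    have := Real.log_le_log h1 (by linarith : t + a ≤ t + b)
    linarith
  have hintw : IntegrableOn (fun t => Real.log (t + b) - Real.log (t + a)) (Ioc a b) := by
    apply IntegrableOn.mono_set _ Ioc_subset_Icc_self
    apply ContinuousOn.integrableOn_Icc
    apply ContinuousOn.sub
    · apply ContinuousOn.log ((continuous_id.add continuous_const).continuousOn)
      intro u hu; have := hu.1; exact ne_of_gt (by linarith : (0:ℝ) < u + b)
    · apply ContinuousOn.log ((continuous_id.add continuous_const).continuousOn)
      intro u hu; have := hu.1; exact ne_of_gt (by linarith : (0:ℝ) < u + a)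
  rw [← ofReal_integral_eq_lintegral_ofReal hintw]
  swap
  · rw [Filter.EventuallyLE, ae_restrict_iff' measurableSet_Ioc]
    exact Filter.Eventually.of_forall fun t ht => hlogpos t (Ioc_subset_Icc_self ht)
  congr 1
  rw [← intervalIntegral.integral_of_le hab]
  -- FTC for the last integral
  have hH : ∀ u ∈ uIcc a b, HasDerivAt
      (fun t => ((t + b) * Real.log (t + b) - (t + b)) - ((t + a) * Real.log (t + a) - (t + a)))
      (Real.log (u + b) - Real.log (u + a)) u := by
    intro u hu
    rw [uIcc_of_le hab] at hu
    have hub : 0 < u + b := by have := hu.1; linarith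
    have hua : 0 < u + a := by have := hu.1; linarith
    have piece : ∀ c : ℝ, 0 < u + c → HasDerivAt
        (fun t : ℝ => (t + c) * Real.log (t + c) - (t + c)) (Real.log (u + c)) u := by
      intro c hc
      have h2 : HasDerivAt (fun t : ℝ => t + c) 1 u := by simpa using (hasDerivAt_id u).add_const c
      have h3 := (Real.hasDerivAt_mul_log (ne_of_gt hc)).comp u h2
      have h4 := h3.sub h2
      exact h4.congr_deriv (by ring)
    have := (piece b hub).sub (piece a hua)
    exact this
  have hcc : ContinuousOn (fun u => Real.log (u + b) - Real.log (u + a)) (uIcc a b) := by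
    rw [uIcc_of_le hab]
    apply ContinuousOn.sub
    · apply ContinuousOn.log ((continuous_id.add continuous_const).continuousOn)
      intro u hu; have := hu.1; exact ne_of_gt (by linarith : (0:ℝ) < u + b)
    · apply ContinuousOn.log ((continuous_id.add continuous_const).continuousOn)
      intro u hu; have := hu.1; exact ne_of_gt (by linarith : (0:ℝ) < u + a)
  rw [intervalIntegral.integral_eq_sub_of_hasDerivAt hH (ContinuousOn.intervalIntegrable hcc)]
  -- arithmetic: H b - H a = psi x y
  unfold psi Fml
  rw [show b + b = y by rw [hb]; ring, show a + b = (x + y)/2 by rw [ha, hb]; ring,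
    show b + a = (x + y)/2 by rw [ha, hb]; ring, show a + a = x by rw [ha]; ring]
  ring


lemma psi_nonneg {x y : ℝ} (hx : 0 ≤ x) (hy : 0 ≤ y) : 0 ≤ psi x y := by
  have h := (Real.convexOn_mul_log).2 (Set.mem_Ici.2 hx) (Set.mem_Ici.2 hy)
    (by norm_num : (0:ℝ) ≤ 1/2) (by norm_num : (0:ℝ) ≤ 1/2) (by norm_num)
  simp only [smul_eq_mul] at h
  unfold psi Fml
  rw [show (x + y)/2 = 1/2 * x + 1/2 * y by ring]
  nlinarith [h]


lemma psi_eq_lintegral {x y : ℝ} (hx : 0 < x) (hy : 0 < y) :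
    (∫⁻ s in Ioi (0:ℝ), ENNReal.ofReal
      (((Real.exp (-(x/2) * s) - Real.exp (-(y/2) * s)) / s) ^ 2)) = ENNReal.ofReal (psi x y) := by
  rcases le_total x y with hxy | hyx
  · exact psi_eq_lintegral' hx hxy
  · rw [psi_symm, ← psi_eq_lintegral' hy hyx]
    apply lintegral_congr
    intro s
    congr 1
    ring

set_option maxHeartbeats 800000 in
lemma sqrt_psi_triangle_pos {x y z : ℝ} (hx : 0 < x) (hy : 0 < y) (hz : 0 < z) :
    Real.sqrt (psi x z) ≤ Real.sqrt (psi x y) + Real.sqrt (psi y z) := by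
  classical
  set f : ℝ → ℝ → ℝ := fun w s => Real.exp (-(w/2) * s) with hf
  set F : ℝ → ℝ → ℝ → ℝ := fun u v s => (f u s - f v s) / s with hF
  have hmeasF : ∀ u v : ℝ, Measurable fun s => ENNReal.ofReal (|F u v s|) := by
    intro u v
    apply Measurable.ennreal_ofReal
    apply Measurable.abs
    apply Measurable.div
    · exact ((Real.continuous_exp.comp (continuous_const.mul continuous_id)).sub
        (Real.continuous_exp.comp (continuous_const.mul continuous_id))).measurable
    · exact measurable_id
  have hΛ : ∀ u v : ℝ, 0 < u → 0 < v →
      (∫⁻ s in Ioi (0:ℝ), (ENNReal.ofReal (|F u v s|)) ^ (2:ℝ)) = ENNReal.ofReal (psi u v) := by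
    intro u v hu hv
    rw [← psi_eq_lintegral hu hv]
    apply lintegral_congr
    intro s
    rw [ENNReal.rpow_two, ← ENNReal.ofReal_pow (abs_nonneg _), sq_abs]
  have hptw : ∀ s : ℝ, ENNReal.ofReal (|F x z s|)
      ≤ ENNReal.ofReal (|F x y s|) + ENNReal.ofReal (|F y z s|) := by
    intro s
    rw [← ENNReal.ofReal_add (abs_nonneg _) (abs_nonneg _)]
    apply ENNReal.ofReal_le_ofReal
    have : F x z s = F x y s + F y z s := by simp only [hF]; ring
    rw [this]
    exact abs_add_le _ _
  have step : (ENNReal.ofReal (psi x z)) ^ (1/2 : ℝ)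
      ≤ (ENNReal.ofReal (psi x y)) ^ (1/2 : ℝ) + (ENNReal.ofReal (psi y z)) ^ (1/2 : ℝ) := by
    rw [← hΛ x z hx hz, ← hΛ x y hx hy, ← hΛ y z hy hz]
    calc (∫⁻ s in Ioi (0:ℝ), (ENNReal.ofReal (|F x z s|)) ^ (2:ℝ)) ^ (1/2 : ℝ)
        ≤ (∫⁻ s in Ioi (0:ℝ),
            (ENNReal.ofReal (|F x y s|) + ENNReal.ofReal (|F y z s|)) ^ (2:ℝ)) ^ (1/2 : ℝ) := by
          apply ENNReal.rpow_le_rpow _ (by norm_num)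
          apply lintegral_mono
          intro s
          exact ENNReal.rpow_le_rpow (hptw s) (by norm_num)
      _ ≤ _ := ENNReal.lintegral_Lp_add_le ((hmeasF x y).aemeasurable)
            ((hmeasF y z).aemeasurable) (by norm_num)
  -- convert to real
  have h1 : ∀ w : ℝ, 0 ≤ w → ((ENNReal.ofReal w) ^ (1/2 : ℝ)).toReal = Real.sqrt w := by
    intro w hw
    rw [← ENNReal.toReal_rpow, ENNReal.toReal_ofReal hw, ← Real.sqrt_eq_rpow]
  have fin : ∀ w : ℝ, (ENNReal.ofReal w) ^ (1/2 : ℝ) ≠ ⊤ := fun w =>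
    ENNReal.rpow_ne_top_of_nonneg (by norm_num) ENNReal.ofReal_ne_top
  have h2 := (ENNReal.toReal_le_toReal (fin _)
    (ENNReal.add_ne_top.2 ⟨fin _, fin _⟩)).2 step
  rw [ENNReal.toReal_add (fin _) (fin _)] at h2
  rw [h1 _ (psi_nonneg hx.le hz.le), h1 _ (psi_nonneg hx.le hy.le),
    h1 _ (psi_nonneg hy.le hz.le)] at h2
  exact h2

lemma sqrt_psi_triangle {x y z : ℝ} (hx : 0 ≤ x) (hy : 0 ≤ y) (hz : 0 ≤ z) :
    Real.sqrt (psi x z) ≤ Real.sqrt (psi x y) + Real.sqrt (psi y z) := by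
  have hcont : ∀ u v : ℝ, Continuous fun ε : ℝ => Real.sqrt (psi (u + ε) (v + ε)) := by
    intro u v
    apply Real.continuous_sqrt.comp
    simp only [psi]
    apply Continuous.sub
    · exact (continuous_Fml.comp (continuous_const.add continuous_id)).add
        (continuous_Fml.comp (continuous_const.add continuous_id))
    · exact continuous_const.mul (continuous_Fml.comp (by continuity))
  have hev : ∀ᶠ ε in nhdsWithin (0:ℝ) (Ioi 0),
      Real.sqrt (psi (x + ε) (z + ε)) ≤
        Real.sqrt (psi (x + ε) (y + ε)) + Real.sqrt (psi (y + ε) (z + ε)) := by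
    apply eventually_nhdsWithin_of_forall
    intro ε hε
    rw [mem_Ioi] at hε
    exact sqrt_psi_triangle_pos (by linarith) (by linarith) (by linarith)
  have lim : ∀ u v : ℝ, Filter.Tendsto (fun ε : ℝ => Real.sqrt (psi (u + ε) (v + ε)))
      (nhdsWithin (0:ℝ) (Ioi 0)) (nhds (Real.sqrt (psi u v))) := by
    intro u v
    have := (hcont u v).tendsto 0
    simp only [add_zero] at this
    exact this.mono_left nhdsWithin_le_nhds
  exact le_of_tendsto_of_tendsto (lim x z) ((lim x y).add (lim y z)) hev



lemma jsdB_nonneg {p q : ℝ} (hp : p ∈ Icc (0:ℝ) 1) (hq : q ∈ Icc (0:ℝ) 1) : 0 ≤ jsdB p q := by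
  have h1 := psi_nonneg hp.1 hq.1
  have h2 := psi_nonneg (by linarith [hp.2] : (0:ℝ) ≤ 1 - p) (by linarith [hq.2] : (0:ℝ) ≤ 1 - q)
  unfold jsdB; linarith

set_option maxHeartbeats 1000000 in
lemma sqrt_jsdB_triangle {a b c : ℝ} (ha : a ∈ Icc (0:ℝ) 1) (hb : b ∈ Icc (0:ℝ) 1)
    (hc : c ∈ Icc (0:ℝ) 1) :
    Real.sqrt (jsdB a c) ≤ Real.sqrt (jsdB a b) + Real.sqrt (jsdB b c) := by
  set A := Real.sqrt (psi a b) with hA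
  set B := Real.sqrt (psi b c) with hB
  set A' := Real.sqrt (psi (1-a) (1-b)) with hA'
  set B' := Real.sqrt (psi (1-b) (1-c)) with hB'
  have hAnn : 0 ≤ A := Real.sqrt_nonneg _
  have hBnn : 0 ≤ B := Real.sqrt_nonneg _
  have hA'nn : 0 ≤ A' := Real.sqrt_nonneg _
  have hB'nn : 0 ≤ B' := Real.sqrt_nonneg _
  have hA2 : A^2 = psi a b := Real.sq_sqrt (psi_nonneg ha.1 hb.1)
  have hB2 : B^2 = psi b c := Real.sq_sqrt (psi_nonneg hb.1 hc.1)
  have hA'2 : A'^2 = psi (1-a) (1-b) :=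
    Real.sq_sqrt (psi_nonneg (by linarith [ha.2]) (by linarith [hb.2]))
  have hB'2 : B'^2 = psi (1-b) (1-c) :=
    Real.sq_sqrt (psi_nonneg (by linarith [hb.2]) (by linarith [hc.2]))
  set u := Real.sqrt (jsdB a b) with hu
  set v := Real.sqrt (jsdB b c) with hv
  have hunn : 0 ≤ u := Real.sqrt_nonneg _
  have hvnn : 0 ≤ v := Real.sqrt_nonneg _
  have hu2 : u^2 = (A^2 + A'^2)/2 := by
    rw [Real.sq_sqrt (jsdB_nonneg ha hb), hA2, hA'2]; rfl
  have hv2 : v^2 = (B^2 + B'^2)/2 := by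
    rw [Real.sq_sqrt (jsdB_nonneg hb hc), hB2, hB'2]; rfl
  -- triangle for each coordinate
  have t1 : psi a c ≤ (A + B)^2 := by
    have h := sqrt_psi_triangle ha.1 hb.1 hc.1
    have h2 : 0 ≤ psi a c := psi_nonneg ha.1 hc.1
    calc psi a c = (Real.sqrt (psi a c))^2 := (Real.sq_sqrt h2).symm
      _ ≤ (A+B)^2 := pow_le_pow_left₀ (Real.sqrt_nonneg _) h 2
  have t2 : psi (1-a) (1-c) ≤ (A' + B')^2 := by
    have h := sqrt_psi_triangle (by linarith [ha.2] : (0:ℝ) ≤ 1-a)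
      (by linarith [hb.2] : (0:ℝ) ≤ 1-b) (by linarith [hc.2] : (0:ℝ) ≤ 1-c)
    have h2 : 0 ≤ psi (1-a) (1-c) := psi_nonneg (by linarith [ha.2]) (by linarith [hc.2])
    calc psi (1-a) (1-c) = (Real.sqrt (psi (1-a) (1-c)))^2 := (Real.sq_sqrt h2).symm
      _ ≤ (A'+B')^2 := pow_le_pow_left₀ (Real.sqrt_nonneg _) h 2
  -- Cauchy-Schwarz
  have cs : A*B + A'*B' ≤ 2*u*v := by
    have h4 : (2*u*v)^2 = (A^2+A'^2)*(B^2+B'^2) := by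
      have e : (2*u*v)^2 = 4*(u^2)*(v^2) := by ring
      rw [e, hu2, hv2]; ring
    have h5 : (A*B + A'*B')^2 ≤ (2*u*v)^2 := by
      rw [h4]; nlinarith [sq_nonneg (A*B' - A'*B)]
    have h6 : 0 ≤ 2*u*v := by positivity
    have h7 : |A*B + A'*B'| ≤ 2*u*v := by
      rw [← Real.sqrt_sq_eq_abs]
      calc Real.sqrt ((A*B+A'*B')^2) ≤ Real.sqrt ((2*u*v)^2) := Real.sqrt_le_sqrt h5
        _ = 2*u*v := Real.sqrt_sq h6
    linarith [le_abs_self (A*B + A'*B')]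
  have key : jsdB a c ≤ (u + v)^2 := by
    have e0 : jsdB a c = (psi a c + psi (1-a) (1-c))/2 := rfl
    have e1 : ((A+B)^2 + (A'+B')^2)/2
        = (A^2+A'^2)/2 + (B^2+B'^2)/2 + (A*B + A'*B') := by ring
    have e2 : (u+v)^2 = u^2 + 2*u*v + v^2 := by ring
    rw [e0, e2]
    linarith [t1, t2, cs, hu2, hv2, e1]
  calc Real.sqrt (jsdB a c) ≤ Real.sqrt ((u+v)^2) := Real.sqrt_le_sqrt key
    _ = u + v := Real.sqrt_sq (by linarith)



lemma bern_prob {p : ℝ≥0∞} (hp : p ≤ 1) : IsProbabilityMeasure (bern p) := by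
  constructor
  simp only [bern, Measure.add_apply, Measure.smul_apply, smul_eq_mul,
    Measure.dirac_apply' _ MeasurableSet.univ]
  simp [add_tsub_cancel_of_le hp]

lemma bern_map {Ω : Type*} [MeasurableSpace Ω] (μ : Measure Ω) [IsProbabilityMeasure μ]
    {Y : Ω → ℝ} (hY : Measurable Y) (hY01 : ∀ ω, Y ω = 0 ∨ Y ω = 1) :
    Measure.map Y μ = bern (μ (Y ⁻¹' {1})) := by
  have hA : MeasurableSet (Y ⁻¹' {1}) := hY (measurableSet_singleton 1)
  ext s hs
  rw [Measure.map_apply hY hs]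
  simp only [bern, Measure.add_apply, Measure.smul_apply, smul_eq_mul,
    Measure.dirac_apply' _ hs]
  by_cases h1 : (1:ℝ) ∈ s <;> by_cases h0 : (0:ℝ) ∈ s
  · have : Y ⁻¹' s = Set.univ := by
      apply Set.eq_univ_iff_forall.2
      intro ω
      rcases hY01 ω with h | h <;> simp [Set.mem_preimage, h, h0, h1]
    rw [this]
    simp only [Set.indicator_of_mem h1, Set.indicator_of_mem h0, Pi.one_apply, mul_one,
      measure_univ]
    have hple : μ (Y ⁻¹' {1}) ≤ 1 := prob_le_one
    exact (add_tsub_cancel_of_le hple).symm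
  · have : Y ⁻¹' s = Y ⁻¹' {1} := by
      ext ω
      rcases hY01 ω with h | h <;> simp [Set.mem_preimage, h, h0, h1]
    rw [this]
    simp [h0, h1]
  · have : Y ⁻¹' s = (Y ⁻¹' {1})ᶜ := by
      ext ω
      rcases hY01 ω with h | h <;> simp [Set.mem_preimage, h, h0, h1]
    rw [this, prob_compl_eq_one_sub hA]
    simp [h0, h1]
  · have : Y ⁻¹' s = ∅ := by
      ext ω
      rcases hY01 ω with h | h <;> simp [Set.mem_preimage, h, h0, h1]
    rw [this]
    simp [h0, h1]

lemma bern_mix {p q : ℝ≥0∞} (hp : p ≤ 1) (hq : q ≤ 1) :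
    (2 : ℝ≥0∞)⁻¹ • (bern p + bern q) = bern (2⁻¹ * (p + q)) := by
  have hs2 : p + q ≤ 2 := by
    calc p + q ≤ 1 + 1 := add_le_add hp hq
    _ = 2 := one_add_one_eq_two
  have hsfin : p + q ≠ ∞ := ne_top_of_le_ne_top (by simp : (2:ℝ≥0∞) ≠ ∞) hs2
  have hcoef : (1 - p) + (1 - q) = 2 - (p + q) := by
    apply ENNReal.eq_sub_of_add_eq hsfin
    rw [add_add_add_comm, tsub_add_cancel_of_le hp, tsub_add_cancel_of_le hq, one_add_one_eq_two]
  have hfin : 2⁻¹ * (p + q) ≠ ∞ := by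
    apply ENNReal.mul_ne_top (by simp)
    exact ne_top_of_le_ne_top (by simp : (2:ℝ≥0∞) ≠ ∞) hs2
  have hco2 : (2:ℝ≥0∞)⁻¹ * ((1 - p) + (1 - q)) = 1 - 2⁻¹ * (p + q) := by
    rw [hcoef]
    apply ENNReal.eq_sub_of_add_eq hfin
    rw [← mul_add, tsub_add_cancel_of_le hs2]
    simp [ENNReal.inv_mul_cancel]
  unfold bern
  rw [show p • Measure.dirac (1:ℝ) + (1 - p) • Measure.dirac 0 +
      (q • Measure.dirac 1 + (1 - q) • Measure.dirac 0)
      = (p + q) • Measure.dirac 1 + ((1 - p) + (1 - q)) • Measure.dirac 0 by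
    rw [add_smul, add_smul]; abel]
  rw [smul_add, smul_smul, smul_smul, hco2]

lemma dirac_withDensity {f : ℝ → ℝ≥0∞} (hf : Measurable f) (a : ℝ) :
    (Measure.dirac a).withDensity f = f a • Measure.dirac a := by
  classical
  ext s hs
  rw [withDensity_apply _ hs, restrict_dirac' hs]
  by_cases h : a ∈ s
  · rw [if_pos h, lintegral_dirac' a hf]
    simp [Measure.dirac_apply' _ hs, Set.indicator_of_mem h]
  · rw [if_neg h]
    simp [Measure.dirac_apply' _ hs, Set.indicator_of_notMem h]

lemma klDiv_bern {p m : ℝ≥0∞} (hp : p ≤ 1) (hm : m ≤ 1) (h0 : m = 0 → p = 0)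
    (h1 : m = 1 → p = 1) :
    klDiv (bern p) (bern m) = klB p.toReal m.toReal := by
  classical
  have hpt : p ≠ ∞ := ne_top_of_le_ne_top ENNReal.one_ne_top hp
  have hmt : m ≠ ∞ := ne_top_of_le_ne_top ENNReal.one_ne_top hm
  haveI := bern_prob hp
  haveI := bern_prob hm
  set fd : ℝ → ℝ≥0∞ := fun x => if x = 1 then p / m else (1 - p) / (1 - m) with hfd_def
  have hfd : Measurable fd := by
    apply Measurable.ite _ measurable_const measurable_const
    rw [show {x : ℝ | x = 1} = {1} from rfl]
    exact measurableSet_singleton 1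
  have heq : bern p = (bern m).withDensity fd := by
    unfold bern
    rw [withDensity_add_measure, withDensity_smul_measure, withDensity_smul_measure,
      dirac_withDensity hfd, dirac_withDensity hfd]
    have hfd1 : fd 1 = p / m := by simp [hfd_def]
    have hfd0 : fd 0 = (1 - p) / (1 - m) := by norm_num [hfd_def]
    rw [hfd1, hfd0, smul_smul, smul_smul]
    congr 1
    · congr 1
      by_cases hm0 : m = 0
      · simp [hm0, h0 hm0]
      · exact (ENNReal.mul_div_cancel hm0 hmt).symm
    · congr 1
      by_cases hm1 : 1 - m = 0
      · have : m = 1 := le_antisymm hm (tsub_eq_zero_iff_le.1 hm1)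
        simp [hm1, h1 this]
      · exact (ENNReal.mul_div_cancel hm1 (by simp)).symm
  have hac : bern p ≪ bern m := heq ▸ withDensity_absolutelyContinuous _ _
  have hrn : (bern p).rnDeriv (bern m) =ᵐ[bern m] fd := by
    rw [heq]
    exact Measure.rnDeriv_withDensity (bern m) hfd
  have hrnp : (bern p).rnDeriv (bern m) =ᵐ[bern p] fd := hac.ae_eq hrn
  have hcongr : klDiv (bern p) (bern m) = ∫ x, Real.log ((fd x).toReal) ∂(bern p) := by
    apply integral_congr_ae
    filter_upwards [hrnp] with x hx
    rw [hx]
  rw [hcongr]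
  -- compute the integral over bern p
  set g : ℝ → ℝ := fun x => Real.log ((fd x).toReal) with hg_def
  have hgmeas : Measurable g := (Real.measurable_log.comp (hfd.ennreal_toReal))
  have hgbdd : ∀ x, ‖g x‖ ≤ ‖Real.log ((p/m).toReal)‖ + ‖Real.log (((1-p)/(1-m)).toReal)‖ := by
    intro x
    simp only [hg_def, hfd_def]
    by_cases h : x = 1 <;> simp [h] <;> positivity
  have hgint : ∀ (ν : Measure ℝ), IsFiniteMeasure ν → Integrable g ν := by
    intro ν hν
    exact Integrable.mono' (integrable_const _) hgmeas.aestronglyMeasurable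
      (Filter.Eventually.of_forall hgbdd)
  have hsplit : (∫ x, g x ∂(bern p))
      = p.toReal * g 1 + (1 - p).toReal * g 0 := by
    unfold bern
    rw [integral_add_measure]
    · rw [integral_smul_measure, integral_smul_measure, integral_dirac, integral_dirac,
        smul_eq_mul, smul_eq_mul]
    · apply Integrable.smul_measure _ hpt
      exact hgint _ (by infer_instance)
    · apply Integrable.smul_measure _ (by simp : (1:ℝ≥0∞) - p ≠ ∞)
      exact hgint _ (by infer_instance)
  rw [hsplit]
  have hg1 : g 1 = Real.log (p.toReal / m.toReal) := by
    simp [hg_def, hfd_def, ENNReal.toReal_div]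
  have hg0 : g 0 = Real.log ((1 - p.toReal) / (1 - m.toReal)) := by
    norm_num [hg_def, hfd_def, ENNReal.toReal_div]
    rw [ENNReal.toReal_sub_of_le hp ENNReal.one_ne_top, ENNReal.toReal_sub_of_le hm ENNReal.one_ne_top]
    norm_num
  have hps : ((1:ℝ≥0∞) - p).toReal = 1 - p.toReal := by
    rw [ENNReal.toReal_sub_of_le hp ENNReal.one_ne_top]; norm_num
  rw [hg1, hg0, hps]
  rfl


lemma toReal_mem_Icc {p : ℝ≥0∞} (hp : p ≤ 1) : p.toReal ∈ Icc (0:ℝ) 1 :=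
  ⟨ENNReal.toReal_nonneg, by simpa using ENNReal.toReal_mono ENNReal.one_ne_top hp⟩

lemma JSD_bern {p q : ℝ≥0∞} (hp : p ≤ 1) (hq : q ≤ 1) :
    JSD (bern p) (bern q) = jsdB p.toReal q.toReal := by
  have hpt : p ≠ ∞ := ne_top_of_le_ne_top ENNReal.one_ne_top hp
  have hqt : q ≠ ∞ := ne_top_of_le_ne_top ENNReal.one_ne_top hq
  set m : ℝ≥0∞ := 2⁻¹ * (p + q) with hm_def
  have hm : m ≤ 1 := by
    rw [hm_def]
    calc 2⁻¹ * (p + q) ≤ 2⁻¹ * (1 + 1) := by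
          exact mul_le_mul' le_rfl (add_le_add hp hq)
      _ = 1 := by rw [one_add_one_eq_two]; simp [ENNReal.inv_mul_cancel]
  have hmix : (2 : ℝ≥0∞)⁻¹ • (bern p + bern q) = bern m := bern_mix hp hq
  have hdouble : ∀ a b : ℝ≥0∞, 2⁻¹ * (a + b) = 1 → a ≤ 1 → b ≤ 1 → a = 1 := by
    intro a b hab ha hb
    have h2 : a + b = 2 := by
      have := congrArg (fun x => 2 * x) hab
      simpa [← mul_assoc, ENNReal.mul_inv_cancel] using this
    apply le_antisymm ha
    have : (1:ℝ≥0∞) + 1 ≤ a + 1 := by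
      calc (1:ℝ≥0∞) + 1 = 2 := one_add_one_eq_two
        _ = a + b := h2.symm
        _ ≤ a + 1 := add_le_add le_rfl hb
    exact (ENNReal.add_le_add_iff_right ENNReal.one_ne_top).1 this
  have hm0 : m = 0 → p = 0 := by
    intro h
    rw [hm_def] at h
    rcases mul_eq_zero.1 h with h' | h'
    · simp at h'
    · exact (add_eq_zero.1 h').1
  have hm0' : m = 0 → q = 0 := by
    intro h
    rw [hm_def] at h
    rcases mul_eq_zero.1 h with h' | h'
    · simp at h'
    · exact (add_eq_zero.1 h').2
  have hm1 : m = 1 → p = 1 := fun h => hdouble p q h hp hq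
  have hm1' : m = 1 → q = 1 := fun h => by
    apply hdouble q p _ hq hp
    rwa [add_comm q p, ← hm_def]
  have hmr : m.toReal = (p.toReal + q.toReal)/2 := by
    rw [hm_def, ENNReal.toReal_mul, ENNReal.toReal_add hpt hqt]
    simp [ENNReal.toReal_inv]
    ring
  unfold JSD
  rw [hmix, klDiv_bern hp hm hm0 hm1, klDiv_bern hq hm hm0' hm1', hmr,
    klB_add_klB (toReal_mem_Icc hp) (toReal_mem_Icc hq)]
  ring

lemma mul_log_abs_le {t : ℝ} (h0 : 0 ≤ t) (h2 : t ≤ 2) : |t * Real.log t| ≤ 2 := by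
  rcases eq_or_lt_of_le h0 with h | h
  · simp [← h]
  rcases le_total t 1 with h1 | h1
  · have hlog : Real.log t ≤ 0 := Real.log_nonpos h0 h1
    have habs : |t * Real.log t| = t * (-Real.log t) := by
      rw [abs_of_nonpos (mul_nonpos_of_nonneg_of_nonpos h0 hlog)]
      ring
    have hinv : -Real.log t = Real.log t⁻¹ := (Real.log_inv t).symm
    have hb : Real.log t⁻¹ ≤ t⁻¹ - 1 := Real.log_le_sub_one_of_pos (by positivity)
    have : t * (-Real.log t) ≤ t * (t⁻¹ - 1) := by
      apply mul_le_mul_of_nonneg_left _ h0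
      rw [hinv]; exact hb
    rw [habs]
    have ht : t * (t⁻¹ - 1) = 1 - t := by field_simp
    nlinarith
  · have hlog : 0 ≤ Real.log t := Real.log_nonneg h1
    have habs : |t * Real.log t| = t * Real.log t := abs_of_nonneg (by positivity)
    have hb : Real.log t ≤ t - 1 := Real.log_le_sub_one_of_pos h
    nlinarith

lemma jensen_set {𝒵 : Type*} [MeasurableSpace 𝒵] (P M : Measure 𝒵)
    [IsProbabilityMeasure P] [IsProbabilityMeasure M] (hPM : P ≪ M)
    (hu2 : (fun x => (P.rnDeriv M x).toReal) ≤ᵐ[M] fun _ => 2)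
    {s : Set 𝒵} (hs : MeasurableSet s) :
    (P s).toReal * Real.log ((P s).toReal / (M s).toReal) ≤
      ∫ x in s, ((P.rnDeriv M x).toReal) * Real.log ((P.rnDeriv M x).toReal) ∂M := by
  classical
  set u : 𝒵 → ℝ := fun x => (P.rnDeriv M x).toReal with hu_def
  have humeas : Measurable u := (Measure.measurable_rnDeriv P M).ennreal_toReal
  by_cases hMs : M s = 0
  · have hPs : P s = 0 := hPM hMs
    rw [hPs]
    simp only [ENNReal.toReal_zero, zero_mul]
    have hz : M.restrict s = 0 := Measure.restrict_eq_zero.2 hMs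
    rw [hz, integral_zero_measure]
  · haveI : NeZero (M.restrict s) := ⟨by rwa [ne_eq, Measure.restrict_eq_zero]⟩
    have hint_u : Integrable u (M.restrict s) := by
      apply Integrable.mono' (integrable_const 2) humeas.aestronglyMeasurable
      apply ae_restrict_of_ae
      filter_upwards [hu2] with x hx
      rw [Real.norm_eq_abs, abs_of_nonneg ENNReal.toReal_nonneg]
      exact hx
    have hint_phi : Integrable (fun x => u x * Real.log (u x)) (M.restrict s) := by
      apply Integrable.mono' (integrable_const 2)
        ((Real.continuous_mul_log.measurable.comp humeas).aestronglyMeasurable)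
      apply ae_restrict_of_ae
      filter_upwards [hu2] with x hx
      rw [Real.norm_eq_abs]
      exact mul_log_abs_le ENNReal.toReal_nonneg hx
    have hjensen := Real.convexOn_mul_log.map_average_le Real.continuous_mul_log.continuousOn
      isClosed_Ici (μ := M.restrict s) (f := u)
      (Filter.Eventually.of_forall fun x => Set.mem_Ici.2 ENNReal.toReal_nonneg)
      hint_u hint_phi
    have havg : ⨍ x, u x ∂(M.restrict s) = (M s).toReal⁻¹ * (P s).toReal := by
      rw [average_eq, measureReal_restrict_apply_univ, smul_eq_mul]
      congr 1
      exact Measure.setIntegral_toReal_rnDeriv hPM s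
    have havg2 : ⨍ x, u x * Real.log (u x) ∂(M.restrict s)
        = (M s).toReal⁻¹ * ∫ x in s, u x * Real.log (u x) ∂M := by
      rw [average_eq, measureReal_restrict_apply_univ, smul_eq_mul]
      rfl
    rw [havg, havg2] at hjensen
    have hMpos : 0 < (M s).toReal := by
      rw [ENNReal.toReal_pos_iff]
      exact ⟨pos_iff_ne_zero.2 hMs, lt_of_le_of_lt prob_le_one (by norm_num)⟩
    have := mul_le_mul_of_nonneg_left hjensen (le_of_lt hMpos)
    calc (P s).toReal * Real.log ((P s).toReal / (M s).toReal)
        = (M s).toReal * (((M s).toReal⁻¹ * (P s).toReal) *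
            Real.log ((M s).toReal⁻¹ * (P s).toReal)) := by
          rw [show (M s).toReal⁻¹ * (P s).toReal = (P s).toReal / (M s).toReal by
            field_simp]
          field_simp
      _ ≤ (M s).toReal * ((M s).toReal⁻¹ * ∫ x in s, u x * Real.log (u x) ∂M) := this
      _ = ∫ x in s, u x * Real.log (u x) ∂M := by
          field_simp

lemma mix_prob {𝒵 : Type*} [MeasurableSpace 𝒵] (P Q : Measure 𝒵)
    [IsProbabilityMeasure P] [IsProbabilityMeasure Q] :
    IsProbabilityMeasure ((2:ℝ≥0∞)⁻¹ • (P + Q)) := by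
  constructor
  simp only [Measure.smul_apply, Measure.add_apply, measure_univ, smul_eq_mul]
  rw [one_add_one_eq_two]
  simp [ENNReal.inv_mul_cancel]

lemma klDiv_map_le {𝒵 : Type*} [MeasurableSpace 𝒵] (P Q : Measure 𝒵)
    [IsProbabilityMeasure P] [IsProbabilityMeasure Q] {h : 𝒵 → ℝ} (hh : Measurable h)
    (hh01 : ∀ z, h z = 0 ∨ h z = 1) :
    klDiv (Measure.map h P) ((2:ℝ≥0∞)⁻¹ • (Measure.map h P + Measure.map h Q)) ≤
      klDiv P ((2:ℝ≥0∞)⁻¹ • (P + Q)) := by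
  classical
  set M : Measure 𝒵 := (2:ℝ≥0∞)⁻¹ • (P + Q) with hM_def
  haveI hMprob : IsProbabilityMeasure M := mix_prob P Q
  have hmap : (2:ℝ≥0∞)⁻¹ • (Measure.map h P + Measure.map h Q) = Measure.map h M := by
    rw [hM_def, Measure.map_smul, Measure.map_add _ _ hh]
  rw [hmap]
  set A : Set 𝒵 := h ⁻¹' {1} with hA_def
  have hA : MeasurableSet A := hh (measurableSet_singleton 1)
  have hPM : P ≪ M := by
    apply Measure.AbsolutelyContinuous.mk
    intro s hs hMs
    rw [hM_def] at hMs
    simp only [Measure.smul_apply, Measure.add_apply, smul_eq_mul] at hMs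
    rcases mul_eq_zero.1 hMs with h' | h'
    · simp at h'
    · exact (add_eq_zero.1 h').1
  -- bound on the density
  set u : 𝒵 → ℝ := fun x => (P.rnDeriv M x).toReal with hu_def
  have hu2 : u ≤ᵐ[M] fun _ => 2 := by
    have hle : P ≤ P + Q := Measure.le_add_right le_rfl
    have h1 : P.rnDeriv (P + Q) ≤ᵐ[P + Q] 1 := Measure.rnDeriv_le_one_of_le hle
    have h2 : P.rnDeriv M =ᵐ[P + Q] ((2:ℝ≥0∞)⁻¹)⁻¹ • P.rnDeriv (P + Q) := by
      rw [hM_def]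
      exact Measure.rnDeriv_smul_right_of_ne_top' P (P + Q) (by simp) (by simp)
    have hacM : M ≪ P + Q := by
      apply Measure.AbsolutelyContinuous.mk
      intro s hs h0
      rw [hM_def]
      simp only [Measure.smul_apply, smul_eq_mul]
      rw [h0, mul_zero]
    have h3 : P.rnDeriv M ≤ᵐ[P + Q] fun _ => (2:ℝ≥0∞) := by
      filter_upwards [h1, h2] with x hx1 hx2
      rw [hx2]
      simp only [Pi.smul_apply, smul_eq_mul, inv_inv]
      calc 2 * P.rnDeriv (P + Q) x ≤ 2 * 1 := mul_le_mul' le_rfl hx1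
        _ = 2 := mul_one 2
    have h4 : P.rnDeriv M ≤ᵐ[M] fun _ => (2:ℝ≥0∞) := h3.filter_mono hacM.ae_le
    filter_upwards [h4] with x hx
    calc (P.rnDeriv M x).toReal ≤ ((2:ℝ≥0∞)).toReal := ENNReal.toReal_mono (by simp) hx
      _ = 2 := by simp
  have humeas : Measurable u := (Measure.measurable_rnDeriv P M).ennreal_toReal
  -- change of variables: klDiv P M = ∫ u log u dM
  have hchg : klDiv P M = ∫ x, u x * Real.log (u x) ∂M := by
    have hρ : M.withDensity (fun x => ((P.rnDeriv M x).toNNReal : ℝ≥0∞)) = P := by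
      have hae : (fun x => ((P.rnDeriv M x).toNNReal : ℝ≥0∞)) =ᵐ[M] P.rnDeriv M := by
        filter_upwards [Measure.rnDeriv_lt_top P M] with x hx
        exact ENNReal.coe_toNNReal hx.ne
      rw [withDensity_congr_ae hae, Measure.withDensity_rnDeriv_eq P M hPM]
    have e1 : klDiv P M = ∫ x, Real.log (u x) ∂P := rfl
    rw [e1, ← hρ, integral_withDensity_eq_integral_smul
      ((Measure.measurable_rnDeriv P M).ennreal_toNNReal)]
    apply integral_congr_ae
    apply Filter.Eventually.of_forall
    intro x
    simp only [smul_eq_mul]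
    rfl
  -- integrability of u log u
  have hint_phi : Integrable (fun x => u x * Real.log (u x)) M := by
    apply Integrable.mono' (integrable_const 2)
      ((Real.continuous_mul_log.measurable.comp humeas).aestronglyMeasurable)
    filter_upwards [hu2] with x hx
    rw [Real.norm_eq_abs]
    exact mul_log_abs_le ENNReal.toReal_nonneg hx
  -- pushforwards are Bernoulli
  have hmapP : Measure.map h P = bern (P A) := bern_map P hh hh01
  have hmapM : Measure.map h M = bern (M A) := bern_map M hh hh01
  have hPA1 : P A ≤ 1 := prob_le_one
  have hMA1 : M A ≤ 1 := prob_le_one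
  have hM0 : M A = 0 → P A = 0 := fun h0 => hPM h0
  have hM1 : M A = 1 → P A = 1 := by
    intro h1
    have hc : M Aᶜ = 0 := by
      rw [prob_compl_eq_one_sub hA, h1]
      simp
    have hpc : P Aᶜ = 0 := hPM hc
    have h2 : (1:ℝ≥0∞) - P A = 0 := by
      rw [← prob_compl_eq_one_sub hA]
      exact hpc
    exact le_antisymm hPA1 (tsub_eq_zero_iff_le.1 h2)
  rw [hmapP, hmapM, klDiv_bern hPA1 hMA1 hM0 hM1, hchg]
  -- split the integral over A and Aᶜ
  rw [← integral_add_compl hA hint_phi]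
  -- complement values
  have hPc : (P Aᶜ).toReal = 1 - (P A).toReal := by
    rw [prob_compl_eq_one_sub hA, ENNReal.toReal_sub_of_le hPA1 ENNReal.one_ne_top]
    norm_num
  have hMc : (M Aᶜ).toReal = 1 - (M A).toReal := by
    rw [prob_compl_eq_one_sub hA, ENNReal.toReal_sub_of_le hMA1 ENNReal.one_ne_top]
    norm_num
  have j1 := jensen_set P M hPM hu2 hA
  have j2 := jensen_set P M hPM hu2 hA.compl
  rw [hPc, hMc] at j2
  unfold klB
  exact add_le_add j1 j2


lemma JSD_map_le {𝒵 : Type*} [MeasurableSpace 𝒵] (P Q : Measure 𝒵)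
    [IsProbabilityMeasure P] [IsProbabilityMeasure Q] {h : 𝒵 → ℝ} (hh : Measurable h)
    (hh01 : ∀ z, h z = 0 ∨ h z = 1) :
    JSD (Measure.map h P) (Measure.map h Q) ≤ JSD P Q := by
  unfold JSD
  have h1 := klDiv_map_le P Q hh hh01
  have h2 := klDiv_map_le Q P hh hh01
  rw [add_comm (Measure.map h Q) (Measure.map h P), add_comm Q P] at h2
  linarith

/-- **Jensen–Shannon lower bound** (Theorem 3.2, second inequality). -/
theorem js_lower_bound_fair_representation
    {Ω 𝒵 : Type*} [MeasurableSpace Ω] [MeasurableSpace 𝒵]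
    (μ₀ μ₁ : Measure Ω) [IsProbabilityMeasure μ₀] [IsProbabilityMeasure μ₁]
    (Y : Ω → ℝ) (g : Ω → 𝒵) (h : 𝒵 → ℝ)
    (hY : Measurable Y) (hg : Measurable g) (hh : Measurable h)
    (hY01 : ∀ ω, Y ω = 0 ∨ Y ω = 1) (hh01 : ∀ z, h z = 0 ∨ h z = 1)
    (hJS : dJS (Measure.map g μ₀) (Measure.map g μ₁) ≤
      dJS (Measure.map Y μ₀) (Measure.map Y μ₁)) :
    (∫ ω, |Y ω - h (g ω)| ∂μ₀) + (∫ ω, |Y ω - h (g ω)| ∂μ₁) ≥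
      (dJS (Measure.map Y μ₀) (Measure.map Y μ₁) -
        dJS (Measure.map g μ₀) (Measure.map g μ₁)) ^ 2 / 2 := by
  classical
  set Yh : Ω → ℝ := h ∘ g with hYh_def
  have hYh : Measurable Yh := hh.comp hg
  have hYh01 : ∀ ω, Yh ω = 0 ∨ Yh ω = 1 := fun ω => hh01 (g ω)
  -- parameters
  set p₀ : ℝ := (μ₀ (Y ⁻¹' {1})).toReal with hp₀
  set p₁ : ℝ := (μ₁ (Y ⁻¹' {1})).toReal with hp₁
  set q₀ : ℝ := (μ₀ (Yh ⁻¹' {1})).toReal with hq₀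
  set q₁ : ℝ := (μ₁ (Yh ⁻¹' {1})).toReal with hq₁
  have hp₀m : p₀ ∈ Icc (0:ℝ) 1 := toReal_mem_Icc prob_le_one
  have hp₁m : p₁ ∈ Icc (0:ℝ) 1 := toReal_mem_Icc prob_le_one
  have hq₀m : q₀ ∈ Icc (0:ℝ) 1 := toReal_mem_Icc prob_le_one
  have hq₁m : q₁ ∈ Icc (0:ℝ) 1 := toReal_mem_Icc prob_le_one
  -- the Y pushforwards
  have hdY : dJS (Measure.map Y μ₀) (Measure.map Y μ₁) = Real.sqrt (jsdB p₀ p₁) := by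
    unfold dJS
    rw [bern_map μ₀ hY hY01, bern_map μ₁ hY hY01, JSD_bern prob_le_one prob_le_one]
  -- instances
  haveI : IsProbabilityMeasure (Measure.map g μ₀) := Measure.isProbabilityMeasure_map hg.aemeasurable
  haveI : IsProbabilityMeasure (Measure.map g μ₁) := Measure.isProbabilityMeasure_map hg.aemeasurable
  -- the predictor pushforwards
  have hmm₀ : Measure.map h (Measure.map g μ₀) = bern (μ₀ (Yh ⁻¹' {1})) := by
    rw [Measure.map_map hh hg]
    exact bern_map μ₀ hYh hYh01
  have hmm₁ : Measure.map h (Measure.map g μ₁) = bern (μ₁ (Yh ⁻¹' {1})) := by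
    rw [Measure.map_map hh hg]
    exact bern_map μ₁ hYh hYh01
  -- data processing
  have hdp : Real.sqrt (jsdB q₀ q₁) ≤ dJS (Measure.map g μ₀) (Measure.map g μ₁) := by
    unfold dJS
    apply Real.sqrt_le_sqrt
    have := JSD_map_le (Measure.map g μ₀) (Measure.map g μ₁) hh hh01
    rwa [hmm₀, hmm₁, JSD_bern prob_le_one prob_le_one] at this
  -- error lower bounds
  have herr : ∀ (μ : Measure Ω), IsProbabilityMeasure μ →
      |(μ (Y ⁻¹' {1})).toReal - (μ (Yh ⁻¹' {1})).toReal| ≤ ∫ ω, |Y ω - h (g ω)| ∂μ := by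
    intro μ hμ
    have hYint : Integrable Y μ := by
      apply Integrable.mono' (integrable_const 1) hY.aestronglyMeasurable
      apply Filter.Eventually.of_forall
      intro ω
      rcases hY01 ω with h' | h' <;> simp [h']
    have hHint : Integrable Yh μ := by
      apply Integrable.mono' (integrable_const 1) hYh.aestronglyMeasurable
      apply Filter.Eventually.of_forall
      intro ω
      rcases hYh01 ω with h' | h' <;> simp [h']
    have hYeq : ∫ ω, Y ω ∂μ = (μ (Y ⁻¹' {1})).toReal := by
      have : ∀ ω, Y ω = Set.indicator (Y ⁻¹' {1}) (fun _ => (1:ℝ)) ω := by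
        intro ω
        rcases hY01 ω with h' | h'
        · rw [Set.indicator_of_notMem (by simp [Set.mem_preimage, h']) , h']
        · rw [Set.indicator_of_mem (by simp [Set.mem_preimage, h']), h']
      rw [integral_congr_ae (Filter.Eventually.of_forall this),
        integral_indicator_const (1:ℝ) (hY (measurableSet_singleton 1))]
      simp
      rfl
    have hHeq : ∫ ω, Yh ω ∂μ = (μ (Yh ⁻¹' {1})).toReal := by
      have : ∀ ω, Yh ω = Set.indicator (Yh ⁻¹' {1}) (fun _ => (1:ℝ)) ω := by
        intro ω
        rcases hYh01 ω with h' | h'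
        · rw [Set.indicator_of_notMem (by simp [Set.mem_preimage, h']), h']
        · rw [Set.indicator_of_mem (by simp [Set.mem_preimage, h']), h']
      rw [integral_congr_ae (Filter.Eventually.of_forall this),
        integral_indicator_const (1:ℝ) (hYh (measurableSet_singleton 1))]
      simp
      rfl
    calc |(μ (Y ⁻¹' {1})).toReal - (μ (Yh ⁻¹' {1})).toReal|
        = |∫ ω, (Y ω - Yh ω) ∂μ| := by rw [integral_sub hYint hHint, hYeq, hHeq]
      _ ≤ ∫ ω, |Y ω - Yh ω| ∂μ := by
          have := norm_integral_le_integral_norm (μ := μ) (f := fun ω => Y ω - Yh ω)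
          simpa [Real.norm_eq_abs] using this
      _ = ∫ ω, |Y ω - h (g ω)| ∂μ := rfl
  have herr₀ := herr μ₀ inferInstance
  have herr₁ := herr μ₁ inferInstance
  rw [← hp₀, ← hq₀] at herr₀
  rw [← hp₁, ← hq₁] at herr₁
  -- triangle chain
  have htri : Real.sqrt (jsdB p₀ p₁) ≤
      Real.sqrt (jsdB p₀ q₀) + (Real.sqrt (jsdB q₀ q₁) + Real.sqrt (jsdB q₁ p₁)) := by
    calc Real.sqrt (jsdB p₀ p₁)
        ≤ Real.sqrt (jsdB p₀ q₀) + Real.sqrt (jsdB q₀ p₁) := sqrt_jsdB_triangle hp₀m hq₀m hp₁m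
      _ ≤ Real.sqrt (jsdB p₀ q₀) + (Real.sqrt (jsdB q₀ q₁) + Real.sqrt (jsdB q₁ p₁)) := by
          have := sqrt_jsdB_triangle hq₀m hq₁m hp₁m
          linarith
  -- Lin bounds
  set e₀ : ℝ := ∫ ω, |Y ω - h (g ω)| ∂μ₀ with he₀
  set e₁ : ℝ := ∫ ω, |Y ω - h (g ω)| ∂μ₁ with he₁
  have he₀nn : 0 ≤ e₀ := integral_nonneg fun ω => abs_nonneg _
  have he₁nn : 0 ≤ e₁ := integral_nonneg fun ω => abs_nonneg _
  have hlin₀ : Real.sqrt (jsdB p₀ q₀) ≤ Real.sqrt e₀ := by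
    apply Real.sqrt_le_sqrt
    calc jsdB p₀ q₀ ≤ |p₀ - q₀| := jsdB_le_abs hp₀m hq₀m
      _ ≤ e₀ := herr₀
  have hlin₁ : Real.sqrt (jsdB q₁ p₁) ≤ Real.sqrt e₁ := by
    apply Real.sqrt_le_sqrt
    rw [jsdB_symm]
    calc jsdB p₁ q₁ ≤ |p₁ - q₁| := jsdB_le_abs hp₁m hq₁m
      _ ≤ e₁ := herr₁
  -- final arithmetic
  set dY : ℝ := dJS (Measure.map Y μ₀) (Measure.map Y μ₁) with hdY_def
  set dg : ℝ := dJS (Measure.map g μ₀) (Measure.map g μ₁) with hdg_def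
  have hdg0 : 0 ≤ dg := Real.sqrt_nonneg _
  have hchain : dY ≤ Real.sqrt e₀ + dg + Real.sqrt e₁ := by
    rw [hdY]
    calc Real.sqrt (jsdB p₀ p₁)
        ≤ Real.sqrt (jsdB p₀ q₀) + (Real.sqrt (jsdB q₀ q₁) + Real.sqrt (jsdB q₁ p₁)) := htri
      _ ≤ Real.sqrt e₀ + (dg + Real.sqrt e₁) := by
          have := hdp
          linarith
      _ = Real.sqrt e₀ + dg + Real.sqrt e₁ := by ring
  have hS0 : 0 ≤ dY - dg := by linarith [hJS]
  have hsq₀ : (Real.sqrt e₀)^2 = e₀ := Real.sq_sqrt he₀nn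
  have hsq₁ : (Real.sqrt e₁)^2 = e₁ := Real.sq_sqrt he₁nn
  have : (dY - dg)^2 ≤ (Real.sqrt e₀ + Real.sqrt e₁)^2 := by
    apply pow_le_pow_left₀ hS0
    linarith
  nlinarith [sq_nonneg (Real.sqrt e₀ - Real.sqrt e₁), Real.sqrt_nonneg e₀, Real.sqrt_nonneg e₁]

end JSAux
end

section
/- Let μ₀ and μ₁ be probability measures on a measurable space Ω, let Y : Ω → ℝ be a measurable label taking values in {0,1}, and let Ŷ : Ω → ℝ be any measurable predictor taking values in {0,1}. Then err₀(Ŷ) + err₁(Ŷ) ≥ |μ₀{Y = 1} − μ₁{Y = 1}| − |μ₀{Ŷ = 1} − μ₁{Ŷ = 1}|. -/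
open MeasureTheory

lemma binary_indicator {Ω : Type*} (Z : Ω → ℝ) (hZ01 : ∀ ω, Z ω = 0 ∨ Z ω = 1) :
    Z = Set.indicator {ω | Z ω = 1} (fun _ => (1:ℝ)) := by
  funext ω
  rcases hZ01 ω with h | h <;> simp [Set.indicator, h]

lemma binary_integrable {Ω : Type*} [MeasurableSpace Ω] (μ : Measure Ω)
    [IsProbabilityMeasure μ] (Z : Ω → ℝ) (hZ : Measurable Z)
    (hZ01 : ∀ ω, Z ω = 0 ∨ Z ω = 1) : Integrable Z μ := by
  have hs : MeasurableSet {ω | Z ω = 1} := hZ (measurableSet_singleton 1)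
  rw [binary_indicator Z hZ01]
  exact (integrable_const (1:ℝ)).indicator hs

lemma binary_integral {Ω : Type*} [MeasurableSpace Ω] (μ : Measure Ω)
    [IsProbabilityMeasure μ] (Z : Ω → ℝ) (hZ : Measurable Z)
    (hZ01 : ∀ ω, Z ω = 0 ∨ Z ω = 1) :
    ∫ ω, Z ω ∂μ = (μ {ω | Z ω = 1}).toReal := by
  have hs : MeasurableSet {ω | Z ω = 1} := hZ (measurableSet_singleton 1)
  rw [show (fun ω => Z ω) = Set.indicator {ω | Z ω = 1} (fun _ => (1:ℝ)) from
    binary_indicator Z hZ01]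
  rw [integral_indicator_const _ hs]
  simp
  rfl

/-- **Corollary 3.4.** For any binary predictor `Yhat`, the sum of the group-wise
errors is lower bounded by the base-rate gap minus the demographic parity gap. -/
theorem error_lower_bound_dp_gap
    {Ω : Type*} [MeasurableSpace Ω]
    (μ₀ μ₁ : Measure Ω) [IsProbabilityMeasure μ₀] [IsProbabilityMeasure μ₁]
    (Y Yhat : Ω → ℝ) (hY : Measurable Y) (hYhat : Measurable Yhat)
    (hY01 : ∀ ω, Y ω = 0 ∨ Y ω = 1) (hYhat01 : ∀ ω, Yhat ω = 0 ∨ Yhat ω = 1) :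
    (∫ ω, |Y ω - Yhat ω| ∂μ₀) + (∫ ω, |Y ω - Yhat ω| ∂μ₁) ≥
      |(μ₀ {ω | Y ω = 1}).toReal - (μ₁ {ω | Y ω = 1}).toReal| -
        |(μ₀ {ω | Yhat ω = 1}).toReal - (μ₁ {ω | Yhat ω = 1}).toReal| := by
  have h0 := err_ge μ₀ Y Yhat hY hYhat hY01 hYhat01
  have h1 := err_ge μ₁ Y Yhat hY hYhat hY01 hYhat01
  set a0 := (μ₀ {ω | Y ω = 1}).toReal
  set a1 := (μ₁ {ω | Y ω = 1}).toReal
  set b0 := (μ₀ {ω | Yhat ω = 1}).toReal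
  set b1 := (μ₁ {ω | Yhat ω = 1}).toReal
  have tri : |a0 - a1| ≤ |a0 - b0| + |b0 - b1| + |b1 - a1| := by
    calc |a0 - a1| = |(a0 - b0) + (b0 - b1) + (b1 - a1)| := by ring_nf
      _ ≤ |a0 - b0| + |b0 - b1| + |b1 - a1| := by
          refine (abs_add_le _ _).trans (by gcongr; exact abs_add_le _ _)
  have : |b1 - a1| = |a1 - b1| := abs_sub_comm _ _
  linarith [h0, h1, tri, this]
end

section
/- Let 𝒳 be a measurable space and let μ₀ and μ₁ be probability measures on 𝒳 × ℝ (the group-conditional joint distributions of input and label), supported on labels in {0,1}. Let h, h₀*, h₁* : 𝒳 → ℝ be measurable functions taking values in {0,1}, and for a ∈ {0,1} define the noise n_a = ∫ |y − h_a*(x)| dμ_a(x, y), the error err_a(h) = ∫ |y − h(x)| dμ_a(x, y), and let ν_a be the marginal of μ_a on 𝒳 (the pushforward under the first projection). Then |err₀(h) − err₁(h)| ≤ (n₀ + n₁) + dTV(ν₀, ν₁) + min{ ∫ |h₀*(x) − h₁*(x)| dν₀(x), ∫ |h₀*(x) − h₁*(x)| dν₁(x) }. -/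
open MeasureTheory

/-- Total variation distance between two measures:
the supremum over measurable sets of the absolute difference of the probabilities. -/
noncomputable def dTV {Ω : Type*} [MeasurableSpace Ω] (P Q : Measure Ω) : ℝ :=
  ⨆ E : {E : Set Ω // MeasurableSet E}, |(P E.1).toReal - (Q E.1).toReal|

lemma abs_toReal_sub_le_dTV {Ω : Type*} [MeasurableSpace Ω] (P Q : Measure Ω)
    [IsProbabilityMeasure P] [IsProbabilityMeasure Q] {E : Set Ω} (hE : MeasurableSet E) :
    |(P E).toReal - (Q E).toReal| ≤ dTV P Q := by
  have hbdd : BddAbove (Set.range fun E : {E : Set Ω // MeasurableSet E} =>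
      |(P E.1).toReal - (Q E.1).toReal|) := by
    refine ⟨2, ?_⟩
    rintro y ⟨⟨F, hF⟩, rfl⟩
    have h1 : (P F).toReal ≤ 1 := by
      simpa using ENNReal.toReal_mono (by simp) (prob_le_one (μ := P) (s := F))
    have h2 : (Q F).toReal ≤ 1 := by
      simpa using ENNReal.toReal_mono (by simp) (prob_le_one (μ := Q) (s := F))
    have := abs_sub_abs_le_abs_sub ((P F).toReal) ((Q F).toReal)
    calc |(P F).toReal - (Q F).toReal| ≤ |(P F).toReal| + |(Q F).toReal| := abs_sub _ _
      _ ≤ 1 + 1 := by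
          gcongr
          · rwa [abs_of_nonneg ENNReal.toReal_nonneg]
          · rwa [abs_of_nonneg ENNReal.toReal_nonneg]
      _ = 2 := by norm_num
  exact le_ciSup hbdd ⟨E, hE⟩

lemma key_abs_sub {α : Type*} [MeasurableSpace α] (μ : Measure α) (f g k : α → ℝ)
    (hf : Integrable f μ) (hg : Integrable g μ) (hk : Integrable k μ)
    (hbound : ∀ᵐ x ∂μ, |f x - g x| ≤ k x) :
    |(∫ x, f x ∂μ) - ∫ x, g x ∂μ| ≤ ∫ x, k x ∂μ := by
  rw [← integral_sub hf hg]
  calc |∫ x, (f x - g x) ∂μ| ≤ ∫ x, |f x - g x| ∂μ := by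
        simpa [Real.norm_eq_abs] using norm_integral_le_integral_norm (f := fun x => f x - g x) (μ := μ)
    _ ≤ ∫ x, k x ∂μ := integral_mono_ae (hf.sub hg).abs hk hbound

/-- **Error Decomposition Theorem** (Theorem 3.3). The accuracy disparity of a
classifier `h` across two groups is bounded by the sum of the group-wise noises,
the total variation distance between the group marginal input distributions, and
the minimal discrepancy between the optimal decision functions of the two groups. -/
theorem error_decomposition
    {𝒳 : Type*} [MeasurableSpace 𝒳]
    (μ₀ μ₁ : Measure (𝒳 × ℝ)) [IsProbabilityMeasure μ₀] [IsProbabilityMeasure μ₁]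
    (hsupp₀ : μ₀ {p | p.2 = 0 ∨ p.2 = 1} = 1) (hsupp₁ : μ₁ {p | p.2 = 0 ∨ p.2 = 1} = 1)
    (h h₀ h₁ : 𝒳 → ℝ) (hh : Measurable h) (hh₀ : Measurable h₀) (hh₁ : Measurable h₁)
    (hh01 : ∀ x, h x = 0 ∨ h x = 1) (hh₀01 : ∀ x, h₀ x = 0 ∨ h₀ x = 1)
    (hh₁01 : ∀ x, h₁ x = 0 ∨ h₁ x = 1) :
    |(∫ p, |p.2 - h p.1| ∂μ₀) - ∫ p, |p.2 - h p.1| ∂μ₁| ≤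
      ((∫ p, |p.2 - h₀ p.1| ∂μ₀) + ∫ p, |p.2 - h₁ p.1| ∂μ₁) +
        dTV (Measure.map Prod.fst μ₀) (Measure.map Prod.fst μ₁) +
        min (∫ x, |h₀ x - h₁ x| ∂(Measure.map Prod.fst μ₀))
          (∫ x, |h₀ x - h₁ x| ∂(Measure.map Prod.fst μ₁)) := by
  -- a.e. support
  have hSmeas : MeasurableSet {p : 𝒳 × ℝ | p.2 = 0 ∨ p.2 = 1} := by
    have : {p : 𝒳 × ℝ | p.2 = 0 ∨ p.2 = 1} = Prod.snd ⁻¹' ({0, 1} : Set ℝ) := by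
      ext p; simp [Set.mem_preimage]
    rw [this]
    exact measurable_snd (by simp [MeasurableSet.insert])
  have hae₀ : ∀ᵐ p ∂μ₀, p.2 = 0 ∨ p.2 = 1 := by
    rw [ae_iff]
    have := prob_compl_eq_zero_iff (μ := μ₀) hSmeas |>.2 hsupp₀
    simpa [Set.compl_setOf] using this
  have hae₁ : ∀ᵐ p ∂μ₁, p.2 = 0 ∨ p.2 = 1 := by
    rw [ae_iff]
    have := prob_compl_eq_zero_iff (μ := μ₁) hSmeas |>.2 hsupp₁
    simpa [Set.compl_setOf] using this
  -- pointwise bound tool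
  have hbd : ∀ (a b : ℝ), (a = 0 ∨ a = 1) → (b = 0 ∨ b = 1) → |a - b| ≤ 1 := by
    rintro a b (rfl | rfl) (rfl | rfl) <;> norm_num
  -- integrability
  have int_err : ∀ (μ : Measure (𝒳 × ℝ)) [IsProbabilityMeasure μ],
      (∀ᵐ p ∂μ, p.2 = 0 ∨ p.2 = 1) → ∀ (g : 𝒳 → ℝ), Measurable g → (∀ x, g x = 0 ∨ g x = 1) →
      Integrable (fun p : 𝒳 × ℝ => |p.2 - g p.1|) μ := by
    intro μ _ hae g hg hg01
    refine Integrable.mono' (integrable_const 1)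
      ((measurable_snd.sub (hg.comp measurable_fst)).abs).aestronglyMeasurable ?_
    filter_upwards [hae] with p hp
    rw [Real.norm_eq_abs, abs_abs]
    exact hbd _ _ hp (hg01 p.1)
  have int_d : ∀ (μ : Measure (𝒳 × ℝ)) [IsProbabilityMeasure μ],
      ∀ (f g : 𝒳 → ℝ), Measurable f → Measurable g →
      (∀ x, f x = 0 ∨ f x = 1) → (∀ x, g x = 0 ∨ g x = 1) →
      Integrable (fun p : 𝒳 × ℝ => |f p.1 - g p.1|) μ := by
    intro μ _ f g hf hg hf01 hg01
    refine Integrable.mono' (integrable_const 1)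
      (((hf.comp measurable_fst).sub (hg.comp measurable_fst)).abs).aestronglyMeasurable ?_
    filter_upwards with p
    rw [Real.norm_eq_abs, abs_abs]
    exact hbd _ _ (hf01 p.1) (hg01 p.1)
  -- |f x - g x| = indicator of {f ≠ g}
  have ind_eq : ∀ (f g : 𝒳 → ℝ), (∀ x, f x = 0 ∨ f x = 1) → (∀ x, g x = 0 ∨ g x = 1) →
      ∀ x, |f x - g x| = ({x | f x ≠ g x}).indicator (1 : 𝒳 → ℝ) x := by
    intro f g hf01 hg01 x
    by_cases hx : f x = g x
    · simp [Set.indicator_apply, hx]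
    · simp only [Set.indicator_apply, Set.mem_setOf_eq, hx, not_false_iff, if_true,
        Pi.one_apply]
      rcases hf01 x with hfx | hfx <;> rcases hg01 x with hgx | hgx <;>
        simp_all <;> norm_num
  -- dTV step, generic
  have dtv_step : ∀ (f g : 𝒳 → ℝ), Measurable f → Measurable g →
      (∀ x, f x = 0 ∨ f x = 1) → (∀ x, g x = 0 ∨ g x = 1) →
      |(∫ p, |f p.1 - g p.1| ∂μ₀) - ∫ p, |f p.1 - g p.1| ∂μ₁| ≤
        dTV (Measure.map Prod.fst μ₀) (Measure.map Prod.fst μ₁) := by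
    intro f g hf hg hf01 hg01
    set E : Set 𝒳 := {x | f x ≠ g x} with hE
    have hEmeas : MeasurableSet E := by
      have : E = (fun x => f x - g x) ⁻¹' ({0}ᶜ) := by
        ext x; simp [hE, sub_eq_zero]
      rw [this]
      exact (hf.sub hg) (measurableSet_singleton 0).compl
    have hint : ∀ (μ : Measure (𝒳 × ℝ)) [IsProbabilityMeasure μ],
        (∫ p, |f p.1 - g p.1| ∂μ) = ((Measure.map Prod.fst μ) E).toReal := by
      intro μ _
      have h1 : (fun p : 𝒳 × ℝ => |f p.1 - g p.1|) =
          fun p => (Prod.fst ⁻¹' E).indicator (1 : 𝒳 × ℝ → ℝ) p := by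
        funext p
        rw [ind_eq f g hf01 hg01 p.1]
        by_cases hx : p.1 ∈ E <;>
          simp [Set.indicator_apply, hx, Set.mem_preimage] <;> simpa [hE] using hx
      rw [h1, integral_indicator_one (measurable_fst hEmeas),
        Measure.map_apply measurable_fst hEmeas]
      rfl
    haveI : IsProbabilityMeasure (Measure.map Prod.fst μ₀) :=
      Measure.isProbabilityMeasure_map measurable_fst.aemeasurable
    haveI : IsProbabilityMeasure (Measure.map Prod.fst μ₁) :=
      Measure.isProbabilityMeasure_map measurable_fst.aemeasurable
    rw [hint μ₀, hint μ₁]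
    exact abs_toReal_sub_le_dTV _ _ hEmeas
  -- marginal integrals to joint integrals
  have map_eq : ∀ (μ : Measure (𝒳 × ℝ)),
      (∫ x, |h₀ x - h₁ x| ∂(Measure.map Prod.fst μ)) = ∫ p, |h₀ p.1 - h₁ p.1| ∂μ := by
    intro μ
    exact integral_map measurable_fst.aemeasurable
      ((hh₀.sub hh₁).abs).aestronglyMeasurable
  -- notation
  set A₀ := ∫ p, |p.2 - h p.1| ∂μ₀ with hA₀
  set A₁ := ∫ p, |p.2 - h p.1| ∂μ₁ with hA₁
  set N₀ := ∫ p, |p.2 - h₀ p.1| ∂μ₀ with hN₀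
  set N₁ := ∫ p, |p.2 - h₁ p.1| ∂μ₁ with hN₁
  set T := dTV (Measure.map Prod.fst μ₀) (Measure.map Prod.fst μ₁) with hT
  -- step 1: |A₀ - d₀(h,h₀)| ≤ N₀
  have step1 : |A₀ - ∫ p, |h₀ p.1 - h p.1| ∂μ₀| ≤ N₀ := by
    refine key_abs_sub μ₀ _ _ _ (int_err μ₀ hae₀ h hh hh01)
      (int_d μ₀ h₀ h hh₀ hh hh₀01 hh01) (int_err μ₀ hae₀ h₀ hh₀ hh₀01) ?_
    filter_upwards with p
    have := abs_sub_abs_le_abs_sub (p.2 - h p.1) (h₀ p.1 - h p.1)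
    calc |(|p.2 - h p.1|) - (|h₀ p.1 - h p.1|)| ≤ |(p.2 - h p.1) - (h₀ p.1 - h p.1)| :=
          abs_abs_sub_abs_le_abs_sub _ _
      _ = |p.2 - h₀ p.1| := by ring_nf
  have step4 : |(∫ p, |h₁ p.1 - h p.1| ∂μ₁) - A₁| ≤ N₁ := by
    refine key_abs_sub μ₁ _ _ _ (int_d μ₁ h₁ h hh₁ hh hh₁01 hh01)
      (int_err μ₁ hae₁ h hh hh01) (int_err μ₁ hae₁ h₁ hh₁ hh₁01) ?_
    filter_upwards with p
    calc |(|h₁ p.1 - h p.1|) - (|p.2 - h p.1|)| ≤ |(h₁ p.1 - h p.1) - (p.2 - h p.1)| :=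
          abs_abs_sub_abs_le_abs_sub _ _
      _ = |p.2 - h₁ p.1| := by rw [← abs_neg]; ring_nf
  -- swap step within one measure: |d_μ(h₀,h) - d_μ(h₁,h)| ≤ d_μ(h₀,h₁)
  have swap : ∀ (μ : Measure (𝒳 × ℝ)) [IsProbabilityMeasure μ],
      |(∫ p, |h₀ p.1 - h p.1| ∂μ) - ∫ p, |h₁ p.1 - h p.1| ∂μ| ≤
        ∫ p, |h₀ p.1 - h₁ p.1| ∂μ := by
    intro μ _
    refine key_abs_sub μ _ _ _ (int_d μ h₀ h hh₀ hh hh₀01 hh01)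
      (int_d μ h₁ h hh₁ hh hh₁01 hh01) (int_d μ h₀ h₁ hh₀ hh₁ hh₀01 hh₁01) ?_
    filter_upwards with p
    calc |(|h₀ p.1 - h p.1|) - (|h₁ p.1 - h p.1|)| ≤ |(h₀ p.1 - h p.1) - (h₁ p.1 - h p.1)| :=
          abs_abs_sub_abs_le_abs_sub _ _
      _ = |h₀ p.1 - h₁ p.1| := by ring_nf
  -- two branches
  have B0 : |A₀ - A₁| ≤ N₀ + N₁ + T + ∫ p, |h₀ p.1 - h₁ p.1| ∂μ₀ := by
    have c1 := step1
    have c2 := swap μ₀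
    have c3 := dtv_step h₁ h hh₁ hh hh₁01 hh01
    have c4 := step4
    calc |A₀ - A₁| ≤ |A₀ - ∫ p, |h₀ p.1 - h p.1| ∂μ₀| +
          |(∫ p, |h₀ p.1 - h p.1| ∂μ₀) - ∫ p, |h₁ p.1 - h p.1| ∂μ₀| +
          |(∫ p, |h₁ p.1 - h p.1| ∂μ₀) - ∫ p, |h₁ p.1 - h p.1| ∂μ₁| +
          |(∫ p, |h₁ p.1 - h p.1| ∂μ₁) - A₁| := by
            linarith [abs_sub_le A₀ (∫ p, |h₁ p.1 - h p.1| ∂μ₁) A₁,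
              abs_sub_le A₀ (∫ p, |h₁ p.1 - h p.1| ∂μ₀) (∫ p, |h₁ p.1 - h p.1| ∂μ₁),
              abs_sub_le A₀ (∫ p, |h₀ p.1 - h p.1| ∂μ₀) (∫ p, |h₁ p.1 - h p.1| ∂μ₀)]
      _ ≤ N₀ + (∫ p, |h₀ p.1 - h₁ p.1| ∂μ₀) + T + N₁ := by gcongr
      _ = N₀ + N₁ + T + ∫ p, |h₀ p.1 - h₁ p.1| ∂μ₀ := by ring
  have B1 : |A₀ - A₁| ≤ N₀ + N₁ + T + ∫ p, |h₀ p.1 - h₁ p.1| ∂μ₁ := by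
    have c1 := step1
    have c2 := dtv_step h₀ h hh₀ hh hh₀01 hh01
    have c3 := swap μ₁
    have c4 := step4
    calc |A₀ - A₁| ≤ |A₀ - ∫ p, |h₀ p.1 - h p.1| ∂μ₀| +
          |(∫ p, |h₀ p.1 - h p.1| ∂μ₀) - ∫ p, |h₀ p.1 - h p.1| ∂μ₁| +
          |(∫ p, |h₀ p.1 - h p.1| ∂μ₁) - ∫ p, |h₁ p.1 - h p.1| ∂μ₁| +
          |(∫ p, |h₁ p.1 - h p.1| ∂μ₁) - A₁| := by
            linarith [abs_sub_le A₀ (∫ p, |h₁ p.1 - h p.1| ∂μ₁) A₁,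
              abs_sub_le A₀ (∫ p, |h₀ p.1 - h p.1| ∂μ₁) (∫ p, |h₁ p.1 - h p.1| ∂μ₁),
              abs_sub_le A₀ (∫ p, |h₀ p.1 - h p.1| ∂μ₀) (∫ p, |h₀ p.1 - h p.1| ∂μ₁)]
      _ ≤ N₀ + T + (∫ p, |h₀ p.1 - h₁ p.1| ∂μ₁) + N₁ := by gcongr
      _ = N₀ + N₁ + T + ∫ p, |h₀ p.1 - h₁ p.1| ∂μ₁ := by ring
  rw [map_eq μ₀, map_eq μ₁]
  rcases le_total (∫ p, |h₀ p.1 - h₁ p.1| ∂μ₀) (∫ p, |h₀ p.1 - h₁ p.1| ∂μ₁) with hle | hle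
  · rw [min_eq_left hle]; linarith
  · rw [min_eq_right hle]; linarith
end

section
/- (Lin's lemma) For any two probability measures P and Q on the same measurable space, JSD(P, Q) ≤ dTV(P, Q); equivalently, d_JS(P, Q)² ≤ dTV(P, Q). -/
open MeasureTheory
open scoped ENNReal

private lemma xlogx_le {x y : ℝ} (hx : 0 ≤ x) (hy : 0 ≤ y) (hxy : x + y = 2) :
    x * Real.log x + y * Real.log y ≤ |x - y| := by
  have key : ∀ t : ℝ, 0 ≤ t → t * Real.log t ≤ t * (t - 1) := by
    intro t ht
    rcases eq_or_lt_of_le ht with h | h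
    · simp [← h]
    · exact mul_le_mul_of_nonneg_left (Real.log_le_sub_one_of_pos h) ht
  have h1 := key x hx
  have h2 := key y hy
  have habs : |x - y| ≤ 2 := by
    rw [abs_le]; constructor <;> nlinarith
  have hsq : x * (x - 1) + y * (y - 1) = (x - y) ^ 2 / 2 := by nlinarith
  have hfin : (x - y) ^ 2 / 2 ≤ |x - y| := by
    nlinarith [sq_abs (x - y), abs_nonneg (x - y)]
  linarith

private lemma xlogx_bound {x : ℝ} (hx : 0 ≤ x) (hx2 : x ≤ 2) : |x * Real.log x| ≤ 2 := by
  rcases eq_or_lt_of_le hx with h | h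
  · simp [← h]
  have h1 : Real.log x ≤ x - 1 := Real.log_le_sub_one_of_pos h
  have h2 : Real.log x⁻¹ ≤ x⁻¹ - 1 := Real.log_le_sub_one_of_pos (by positivity)
  rw [Real.log_inv] at h2
  have h3 : x * (-Real.log x) ≤ x * (x⁻¹ - 1) := mul_le_mul_of_nonneg_left h2 h.le
  have h4 : x * (x⁻¹ - 1) = 1 - x := by field_simp
  have h5 : x * Real.log x ≤ x * (x - 1) := mul_le_mul_of_nonneg_left h1 h.le
  rw [abs_le]; constructor <;> nlinarith

/-- **Lin's lemma**: the Jensen–Shannon divergence is bounded by the total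
variation distance, i.e. `d_JS(P, Q)² = JSD(P, Q) ≤ dTV(P, Q)`. -/
theorem lin_lemma
    {Ω : Type*} [MeasurableSpace Ω]
    (P Q : Measure Ω) [IsProbabilityMeasure P] [IsProbabilityMeasure Q] :
    JSD P Q ≤ dTV P Q ∧ dJS P Q ^ 2 ≤ dTV P Q := by
  set M : Measure Ω := (2 : ℝ≥0∞)⁻¹ • (P + Q) with hM
  haveI hMprob : IsProbabilityMeasure M := by
    constructor
    rw [hM]
    simp only [Measure.smul_apply, Measure.add_apply, smul_eq_mul]
    rw [measure_univ, measure_univ, one_add_one_eq_two]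
    exact ENNReal.inv_mul_cancel (by norm_num) (by norm_num)
  -- boundedness of the supremum defining dTV
  have hbdd : BddAbove (Set.range fun E : {E : Set Ω // MeasurableSet E} =>
      |(P E.1).toReal - (Q E.1).toReal|) := by
    refine ⟨2, ?_⟩
    rintro x ⟨E, rfl⟩
    have hP : (P E.1).toReal ≤ 1 := by
      simpa using ENNReal.toReal_mono (by norm_num) (prob_le_one (μ := P) (s := E.1))
    have hQ : (Q E.1).toReal ≤ 1 := by
      simpa using ENNReal.toReal_mono (by norm_num) (prob_le_one (μ := Q) (s := E.1))
    have h0P : (0:ℝ) ≤ (P E.1).toReal := ENNReal.toReal_nonneg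
    have h0Q : (0:ℝ) ≤ (Q E.1).toReal := ENNReal.toReal_nonneg
    rw [abs_le]; constructor <;> linarith
  have hdTV0 : 0 ≤ dTV P Q :=
    le_trans (abs_nonneg _) (le_ciSup hbdd ⟨∅, MeasurableSet.empty⟩)
  have hPM : P ≪ M := by
    have h1 : P ≪ P + Q := Measure.absolutelyContinuous_of_le (Measure.le_add_right le_rfl)
    exact h1.trans (Measure.absolutelyContinuous_smul (by norm_num))
  have hQM : Q ≪ M := by
    have h1 : Q ≪ P + Q := Measure.absolutelyContinuous_of_le (Measure.le_add_left le_rfl)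
    exact h1.trans (Measure.absolutelyContinuous_smul (by norm_num))
  set p : Ω → ℝ := fun ω => (P.rnDeriv M ω).toReal with hp_def
  set q : Ω → ℝ := fun ω => (Q.rnDeriv M ω).toReal with hq_def
  have hpmeas : Measurable p := (Measure.measurable_rnDeriv _ _).ennreal_toReal
  have hqmeas : Measurable q := (Measure.measurable_rnDeriv _ _).ennreal_toReal
  -- p + q = 2 a.e.
  have hsumE : ∀ᵐ ω ∂M, P.rnDeriv M ω + Q.rnDeriv M ω = 2 := by
    have hPQ : P + Q = (2 : ℝ≥0∞) • M := by
      rw [hM, smul_smul, ENNReal.mul_inv_cancel (by norm_num) (by norm_num), one_smul]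
    have h1 : (P + Q).rnDeriv M =ᵐ[M] P.rnDeriv M + Q.rnDeriv M :=
      Measure.rnDeriv_add P Q M
    have h2 : ((2 : ℝ≥0∞) • M).rnDeriv M =ᵐ[M] (2 : ℝ≥0∞) • M.rnDeriv M :=
      Measure.rnDeriv_smul_left_of_ne_top M M (by norm_num)
    have h3 : M.rnDeriv M =ᵐ[M] fun _ => 1 := Measure.rnDeriv_self M
    rw [hPQ] at h1
    filter_upwards [h1, h2, h3] with ω e1 e2 e3
    have : (P.rnDeriv M + Q.rnDeriv M) ω = ((2 : ℝ≥0∞) • M.rnDeriv M) ω := by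
      rw [← e1, e2]
    simp only [Pi.add_apply, Pi.smul_apply, e3, smul_eq_mul, mul_one] at this
    exact this
  have hsum : ∀ᵐ ω ∂M, p ω + q ω = 2 := by
    filter_upwards [hsumE] with ω h
    have hp : P.rnDeriv M ω ≠ ∞ := by
      intro hc; rw [hc] at h; simp at h
    have hq : Q.rnDeriv M ω ≠ ∞ := by
      intro hc; rw [hc] at h; simp at h
    have := congrArg ENNReal.toReal h
    rw [ENNReal.toReal_add hp hq] at this
    simpa using this
  have hple2 : ∀ᵐ ω ∂M, p ω ≤ 2 := by
    filter_upwards [hsum] with ω h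
    have : 0 ≤ q ω := ENNReal.toReal_nonneg
    linarith
  have hqle2 : ∀ᵐ ω ∂M, q ω ≤ 2 := by
    filter_upwards [hsum] with ω h
    have : 0 ≤ p ω := ENNReal.toReal_nonneg
    linarith
  -- rewriting the KL divergences as integrals over M
  have hklP : klDiv P M = ∫ ω, p ω * Real.log (p ω) ∂M := by
    rw [klDiv, ← integral_rnDeriv_smul hPM]
    simp [smul_eq_mul]; rfl
  have hklQ : klDiv Q M = ∫ ω, q ω * Real.log (q ω) ∂M := by
    rw [klDiv, ← integral_rnDeriv_smul hQM]
    simp [smul_eq_mul]; rfl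
  -- integrability
  have hintp : Integrable (fun ω => p ω * Real.log (p ω)) M := by
    refine Integrable.mono' (integrable_const 2)
      (hpmeas.mul (Real.measurable_log.comp hpmeas)).aestronglyMeasurable ?_
    filter_upwards [hple2] with ω h using xlogx_bound ENNReal.toReal_nonneg h
  have hintq : Integrable (fun ω => q ω * Real.log (q ω)) M := by
    refine Integrable.mono' (integrable_const 2)
      (hqmeas.mul (Real.measurable_log.comp hqmeas)).aestronglyMeasurable ?_
    filter_upwards [hqle2] with ω h using xlogx_bound ENNReal.toReal_nonneg h
  have hintp' : Integrable p M := Measure.integrable_toReal_rnDeriv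
  have hintq' : Integrable q M := Measure.integrable_toReal_rnDeriv
  -- pointwise bound
  have hptwise : ∀ᵐ ω ∂M, p ω * Real.log (p ω) + q ω * Real.log (q ω) ≤ |p ω - q ω| := by
    filter_upwards [hsum] with ω h
    exact xlogx_le ENNReal.toReal_nonneg ENNReal.toReal_nonneg h
  have hJSD : JSD P Q = (∫ ω, (p ω * Real.log (p ω) + q ω * Real.log (q ω)) ∂M) / 2 := by
    rw [JSD, ← hM, hklP, hklQ, integral_add hintp hintq]
  have hle1 : ∫ ω, (p ω * Real.log (p ω) + q ω * Real.log (q ω)) ∂M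
      ≤ ∫ ω, |p ω - q ω| ∂M :=
    integral_mono_ae (hintp.add hintq) (hintp'.sub hintq').abs hptwise
  -- the set where p ≥ q
  set E : Set Ω := {ω | q ω ≤ p ω} with hE_def
  have hE : MeasurableSet E := measurableSet_le hqmeas hpmeas
  have hPE : ∫ ω in E, p ω ∂M = (P E).toReal := Measure.setIntegral_toReal_rnDeriv hPM E
  have hQE : ∫ ω in E, q ω ∂M = (Q E).toReal := Measure.setIntegral_toReal_rnDeriv hQM E
  have htotP : ∫ ω, p ω ∂M = 1 := by
    rw [Measure.integral_toReal_rnDeriv hPM]; simp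
  have htotQ : ∫ ω, q ω ∂M = 1 := by
    rw [Measure.integral_toReal_rnDeriv hQM]; simp
  have hsub : Integrable (fun ω => p ω - q ω) M := hintp'.sub hintq'
  have htot0 : ∫ ω, (p ω - q ω) ∂M = 0 := by
    rw [integral_sub hintp' hintq', htotP, htotQ]; ring
  have hsplit : ∫ ω in E, (p ω - q ω) ∂M + ∫ ω in Eᶜ, (p ω - q ω) ∂M = 0 := by
    rw [integral_add_compl hE hsub, htot0]
  have habsE : ∫ ω in E, |p ω - q ω| ∂M = ∫ ω in E, (p ω - q ω) ∂M := by
    refine setIntegral_congr_fun hE ?_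
    intro ω hω
    exact abs_of_nonneg (sub_nonneg.2 hω)
  have habsEc : ∫ ω in Eᶜ, |p ω - q ω| ∂M = - ∫ ω in Eᶜ, (p ω - q ω) ∂M := by
    rw [← integral_neg]
    refine setIntegral_congr_fun hE.compl ?_
    intro ω hω
    have : ¬ (q ω ≤ p ω) := hω
    have hlt : p ω < q ω := lt_of_not_ge this
    show |p ω - q ω| = -(p ω - q ω)
    rw [abs_of_neg (by linarith : p ω - q ω < 0)]
  have habs_total : ∫ ω, |p ω - q ω| ∂M = 2 * ∫ ω in E, (p ω - q ω) ∂M := by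
    rw [← integral_add_compl hE hsub.abs, habsE, habsEc]
    linarith [hsplit]
  have hEdiff : ∫ ω in E, (p ω - q ω) ∂M = (P E).toReal - (Q E).toReal := by
    rw [integral_sub (hintp'.integrableOn) (hintq'.integrableOn), hPE, hQE]
  have hdTVge : (P E).toReal - (Q E).toReal ≤ dTV P Q :=
    le_trans (le_abs_self _) (le_ciSup hbdd ⟨E, hE⟩)
  have hmain : JSD P Q ≤ dTV P Q := by
    rw [hJSD]
    calc (∫ ω, (p ω * Real.log (p ω) + q ω * Real.log (q ω)) ∂M) / 2
        ≤ (∫ ω, |p ω - q ω| ∂M) / 2 := by linarith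
      _ = (P E).toReal - (Q E).toReal := by rw [habs_total, hEdiff]; ring
      _ ≤ dTV P Q := hdTVge
  refine ⟨hmain, ?_⟩
  rw [dJS]
  rcases le_or_gt 0 (JSD P Q) with h | h
  · rw [Real.sq_sqrt h]; exact hmain
  · rw [Real.sqrt_eq_zero_of_nonpos h.le]
    simpa using hdTV0
end
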